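/- arXiv:1107.5094 — 6 statements merged into one kernel-verified Lean document; each statement's English description precedes it below -/
import Mathlib

section
/- Let M = (E, F) be a matroid with closure operator σ. For two independent sets S, T ∈ F, one has σ(S) = σ(T) if and only if the set of independent sets U with U ∩ S = ∅ and U ∪ S independent equals the set of independent sets U with U ∩ T = ∅ and U ∪ T independent. -/
open Set

private lemma aux_compat {α : Type*} {M : Matroid α} [M.Finite]
    {S T U : Set α} (hS : M.Indep S) (hT : M.Indep T)
    (hcl : M.closure S = M.closure T)
    (hU : M.Indep U) (hdis : U ∩ S = ∅) (hUS : M.Indep (U ∪ S)) :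
    U ∩ T = ∅ ∧ M.Indep (U ∪ T) := by
  -- U is disjoint from the closure of S
  have hUcl : U ∩ M.closure S = ∅ := by
    ext x
    simp only [mem_inter_iff, mem_empty_iff_false, iff_false, not_and]
    intro hxU hxcl
    have hxS : x ∉ S := fun hxS => (eq_empty_iff_forall_notMem.mp hdis x) ⟨hxU, hxS⟩
    have hins : M.Indep (insert x S) := hUS.subset (insert_subset (Or.inl hxU) subset_union_right)
    rw [hS.insert_indep_iff_of_notMem hxS] at hins
    exact hins.2 hxcl
  have hUT : U ∩ T = ∅ := by
    apply subset_empty_iff.mp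
    rw [← hUcl, hcl]
    exact inter_subset_inter_right _ (M.subset_closure T hT.subset_ground)
  refine ⟨hUT, ?_⟩
  -- extend T to a basis B of U ∪ S ∪ T
  have hsub : U ∪ S ∪ T ⊆ M.E :=
    union_subset (hUS.subset_ground) hT.subset_ground
  obtain ⟨B, hB, hTB⟩ := hT.subset_isBasis_of_subset (subset_union_right : T ⊆ U ∪ S ∪ T) hsub
  -- U ∪ S is also a basis of U ∪ S ∪ T
  have hUSbasis : M.IsBasis (U ∪ S) (U ∪ S ∪ T) := by
    refine hUS.isBasis_of_subset_of_subset_closure subset_union_left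
      (union_subset (M.subset_closure _ hUS.subset_ground) ?_)
    calc T ⊆ M.closure T := M.subset_closure T hT.subset_ground
    _ = M.closure S := hcl.symm
    _ ⊆ M.closure (U ∪ S) := M.closure_subset_closure subset_union_right
  -- B ⊆ U ∪ T
  have hBsub : B ⊆ U ∪ T := by
    intro x hxB
    rcases hB.subset hxB with (hxU | hxS) | hxT
    · exact Or.inl hxU
    · by_cases hxT : x ∈ T
      · exact Or.inr hxT
      · exfalso
        have hins : M.Indep (insert x T) := hB.indep.subset (insert_subset hxB hTB)
        rw [hT.insert_indep_iff_of_notMem hxT] at hins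
        exact hins.2 (hcl ▸ M.subset_closure S hS.subset_ground hxS)
    · exact Or.inr hxT
  -- cardinalities
  have hST : S.encard = T.encard :=
    (hS.isBasis_closure).encard_eq_encard (hcl ▸ hT.isBasis_closure)
  have hdisUS : Disjoint U S := disjoint_iff_inter_eq_empty.mpr hdis
  have hdisUT : Disjoint U T := disjoint_iff_inter_eq_empty.mpr hUT
  have hcard : (U ∪ T).encard = B.encard := by
    rw [hB.encard_eq_encard hUSbasis, encard_union_eq hdisUT, encard_union_eq hdisUS, hST]
  have hfin : (U ∪ T).Finite := M.set_finite _ (union_subset hU.subset_ground hT.subset_ground)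
  have : B = U ∪ T := hfin.eq_of_subset_of_encard_le' hBsub hcard.le
  exact this ▸ hB.indep

/-- For independent sets `S, T` of a matroid `M` on a finite ground set,
`σ(S) = σ(T)` iff the set of independent sets `U` disjoint from `S` with `U ∪ S`
independent coincides with the corresponding set for `T`. -/
theorem closure_eq_iff_compatible_indep_sets_eq {α : Type*} (M : Matroid α) [M.Finite]
    {S T : Set α} (hS : M.Indep S) (hT : M.Indep T) :
    M.closure S = M.closure T ↔
      {U : Set α | M.Indep U ∧ U ∩ S = ∅ ∧ M.Indep (U ∪ S)} =
        {U : Set α | M.Indep U ∧ U ∩ T = ∅ ∧ M.Indep (U ∪ T)} := by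
  constructor
  · intro hcl
    ext U
    simp only [mem_setOf_eq]
    constructor
    · rintro ⟨hU, h1, h2⟩
      obtain ⟨h1', h2'⟩ := aux_compat hS hT hcl hU h1 h2
      exact ⟨hU, h1', h2'⟩
    · rintro ⟨hU, h1, h2⟩
      obtain ⟨h1', h2'⟩ := aux_compat hT hS hcl.symm hU h1 h2
      exact ⟨hU, h1', h2'⟩
  · intro hsets
    -- show the closures are equal
    have key : ∀ S' T' : Set α, M.Indep S' → M.Indep T' →
        {U : Set α | M.Indep U ∧ U ∩ S' = ∅ ∧ M.Indep (U ∪ S')} ⊆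
          {U : Set α | M.Indep U ∧ U ∩ T' = ∅ ∧ M.Indep (U ∪ T')} →
        M.closure T' ⊆ M.closure S' := by
      intro S' T' hS' hT' hsub x hx
      by_contra hxS
      have hxE : x ∈ M.E := M.closure_subset_ground T' hx
      have hins : M.Indep (insert x S') := by
        rw [hS'.insert_indep_iff]
        exact Or.inl ⟨hxE, hxS⟩
      have hxnS : x ∉ S' := fun h => hxS (M.subset_closure S' hS'.subset_ground h)
      have hmem : {x} ∈ {U : Set α | M.Indep U ∧ U ∩ S' = ∅ ∧ M.Indep (U ∪ S')} := by
        refine ⟨hins.subset (by simp), by simp [hxnS], by simpa using hins⟩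
      obtain ⟨_, h1, h2⟩ := hsub hmem
      have hxnT : x ∉ T' := fun h => (eq_empty_iff_forall_notMem.mp h1 x) ⟨rfl, h⟩
      have : M.Indep (insert x T') := by simpa using h2
      rw [hT'.insert_indep_iff_of_notMem hxnT] at this
      exact this.2 hx
    exact subset_antisymm (key T S hT hS hsets.symm.subset) (key S T hS hT hsets.subset)
end

section
/- Let M be a matroid with rank function r and closure σ on finite ground set E. Suppose A, A', B, B' are independent sets with σ(A) = σ(A'), σ(B) = σ(B'), and set C = A ∩ B, Â = A \ C, B̂ = B \ C. If A' ∪ B̂ is independent and A' ∩ B̂ = ∅, then B' ∪ Â is independent and B' ∩ Â = ∅. -/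
/-- Let `A, A', B, B'` be independent sets with `σ(A) = σ(A')`,
`σ(B) = σ(B')`, and set `C = A ∩ B`, `Â = A \ C`, `B̂ = B \ C`. If `A' ∪ B̂` is
independent and `A' ∩ B̂ = ∅`, then `B' ∪ Â` is independent and `B' ∩ Â = ∅`. -/
theorem indep_union_symm_of_closure_eq {α : Type*} (M : Matroid α) [M.Finite]
    {A A' B B' : Set α} (hA : M.Indep A) (hA' : M.Indep A') (hB : M.Indep B)
    (hB' : M.Indep B') (hAA' : M.closure A = M.closure A')
    (hBB' : M.closure B = M.closure B')
    (h1 : M.Indep (A' ∪ (B \ (A ∩ B)))) (h2 : A' ∩ (B \ (A ∩ B)) = ∅) :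
    M.Indep (B' ∪ (A \ (A ∩ B))) ∧ B' ∩ (A \ (A ∩ B)) = ∅ := by
  set C := A ∩ B with hC
  set Ah := A \ C with hAh
  set Bh := B \ C with hBh
  have hABu : A ∪ Bh = A ∪ B := by
    ext x; simp [hBh, hC]
  have hBAu : B ∪ Ah = A ∪ B := by
    ext x; simp [hAh, hC]; tauto
  -- closures
  have hcl1 : M.closure (A' ∪ Bh) = M.closure (A ∪ B) := by
    rw [← M.closure_union_closure_left_eq A' Bh, ← hAA',
      M.closure_union_closure_left_eq, hABu]
  have hcl2 : M.closure (B' ∪ Ah) = M.closure (A ∪ B) := by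
    rw [← M.closure_union_closure_left_eq B' Ah, ← hBB',
      M.closure_union_closure_left_eq, hBAu]
  -- bases of the same closure
  have hb1 : M.IsBasis (A' ∪ Bh) (M.closure (A ∪ B)) := by
    rw [← hcl1]; exact h1.isBasis_closure
  have hsub : B' ∪ Ah ⊆ M.E :=
    Set.union_subset hB'.subset_ground ((Set.diff_subset).trans hA.subset_ground)
  obtain ⟨D, hD⟩ := M.exists_isBasis (B' ∪ Ah) hsub
  have hb2 : M.IsBasis D (M.closure (A ∪ B)) := by
    rw [← hcl2]; exact hD.isBasis_closure_right
  have hcardD : D.encard = (A' ∪ Bh).encard := hb2.encard_eq_encard hb1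
  -- cardinalities
  have hcAA' : A.encard = A'.encard := by
    have h1' : M.IsBasis A (M.closure A) := hA.isBasis_closure
    have h2' : M.IsBasis A' (M.closure A) := by rw [hAA']; exact hA'.isBasis_closure
    exact h1'.encard_eq_encard h2'
  have hcBB' : B.encard = B'.encard := by
    have h1' : M.IsBasis B (M.closure B) := hB.isBasis_closure
    have h2' : M.IsBasis B' (M.closure B) := by rw [hBB']; exact hB'.isBasis_closure
    exact h1'.encard_eq_encard h2'
  have hdisj1 : Disjoint A' Bh := Set.disjoint_iff_inter_eq_empty.mpr h2
  have hcA : Ah.encard + C.encard = A.encard :=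
    Set.encard_diff_add_encard_of_subset Set.inter_subset_left
  have hcB : Bh.encard + C.encard = B.encard :=
    Set.encard_diff_add_encard_of_subset Set.inter_subset_right
  have hkey : (A' ∪ Bh).encard = B'.encard + Ah.encard := by
    rw [Set.encard_union_eq hdisj1, ← hcAA', ← hcA, ← hcBB', ← hcB]
    ring
  -- finiteness
  have hfin : (B' ∪ Ah).Finite :=
    (hB'.finite).union (hA.finite.subset Set.diff_subset)
  have hle : (B' ∪ Ah).encard ≤ D.encard := by
    rw [hcardD, hkey]; exact Set.encard_union_le _ _
  have hDeq : D = B' ∪ Ah := hfin.eq_of_subset_of_encard_le' hD.subset hle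
  have hindep : M.Indep (B' ∪ Ah) := hDeq ▸ hD.indep
  refine ⟨hindep, ?_⟩
  have hsum : (B' ∪ Ah).encard + (B' ∩ Ah).encard = B'.encard + Ah.encard :=
    Set.encard_union_add_encard_inter B' Ah
  have hcard : (B' ∪ Ah).encard = B'.encard + Ah.encard := by
    rw [← hDeq, hcardD, hkey]
  rw [hcard] at hsum
  have h0 : (B' ∩ Ah).encard = 0 := by
    have hne : B'.encard + Ah.encard ≠ ⊤ := by
      rw [← hcard]; exact hfin.encard_lt_top.ne
    nth_rewrite 2 [← add_zero (B'.encard + Ah.encard)] at hsum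
    exact WithTop.add_left_cancel hne hsum
  exact Set.encard_eq_zero.mp h0
end

section
/- Let L be a finite geometric lattice (atomic and upper semimodular, graded by its rank function). If L is modular, then the number of atoms of L equals the number of coatoms of L. -/
open Finset Classical
set_option linter.unusedSectionVars false
set_option maxHeartbeats 1000000

open Finset Classical

set_option linter.unusedSectionVars false

section Mob
variable {L : Type*} [Lattice L] [Fintype L]

private lemma cardlt_of_lt {x y : L} (h : x < y) :
    (Finset.univ.filter fun z => z < x).card < (Finset.univ.filter fun z => z < y).card := by
  apply Finset.card_lt_card
  constructor
  · intro z hz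
    simp only [Finset.mem_filter, Finset.mem_univ, true_and] at *
    exact hz.trans h
  · intro hsub
    have := hsub (Finset.mem_filter.mpr ⟨Finset.mem_univ x, h⟩)
    simp only [Finset.mem_filter] at this
    exact lt_irrefl x this.2

private lemma cardgt_of_lt {x y : L} (h : x < y) :
    (Finset.univ.filter fun z => y < z).card < (Finset.univ.filter fun z => x < z).card := by
  apply Finset.card_lt_card
  constructor
  · intro z hz
    simp only [Finset.mem_filter, Finset.mem_univ, true_and] at *
    exact h.trans hz
  · intro hsub
    have := hsub (Finset.mem_filter.mpr ⟨Finset.mem_univ y, h⟩)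
    simp only [Finset.mem_filter] at this
    exact lt_irrefl y this.2

noncomputable def mobLow (b : L) (x : L) : ℤ :=
  if x = b then 1 else
    - ∑ y ∈ (Finset.univ.filter fun y => b ≤ y ∧ y < x).attach, mobLow b y.1
termination_by (Finset.univ.filter fun z => z < x).card
decreasing_by
  exact cardlt_of_lt (Finset.mem_filter.mp y.2).2.2

noncomputable def mobHigh (y : L) (x : L) : ℤ :=
  if y = x then 1 else
    - ∑ z ∈ (Finset.univ.filter fun z => y < z ∧ z ≤ x).attach, mobHigh z.1 x
termination_by (Finset.univ.filter fun z => y < z).card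
decreasing_by
  exact cardgt_of_lt (Finset.mem_filter.mp z.2).2.1

lemma mobLow_self (b : L) : mobLow b b = 1 := by rw [mobLow]; simp

lemma mobHigh_self (x : L) : mobHigh x x = 1 := by rw [mobHigh]; simp

lemma mobLow_def {b t : L} (h : b < t) :
    mobLow b t = - ∑ y ∈ (Finset.univ.filter fun y => b ≤ y ∧ y < t), mobLow b y := by
  rw [mobLow, if_neg h.ne']
  rw [Finset.sum_attach _ (fun y => mobLow b y)]

lemma mobHigh_def {t x : L} (h : t < x) :
    mobHigh t x = - ∑ z ∈ (Finset.univ.filter fun z => t < z ∧ z ≤ x), mobHigh z x := by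
  rw [mobHigh, if_neg h.ne]
  rw [Finset.sum_attach _ (fun z => mobHigh z x)]

lemma mobLow_sum {b t : L} (h : b < t) :
    ∑ y ∈ (Finset.univ.filter fun y => b ≤ y ∧ y ≤ t), mobLow b y = 0 := by
  have hset : (Finset.univ.filter fun y => b ≤ y ∧ y ≤ t) =
      insert t (Finset.univ.filter fun y => b ≤ y ∧ y < t) := by
    ext y
    simp only [Finset.mem_filter, Finset.mem_univ, true_and, Finset.mem_insert]
    constructor
    · rintro ⟨h1, h2⟩
      rcases eq_or_lt_of_le h2 with h3 | h3
      · exact Or.inl h3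
      · exact Or.inr ⟨h1, h3⟩
    · rintro (rfl | ⟨h1, h2⟩)
      · exact ⟨h.le, le_rfl⟩
      · exact ⟨h1, h2.le⟩
  rw [hset, Finset.sum_insert (by simp), mobLow_def h]
  ring

lemma mobHigh_sum {t x : L} (h : t < x) :
    ∑ z ∈ (Finset.univ.filter fun z => t ≤ z ∧ z ≤ x), mobHigh z x = 0 := by
  have hset : (Finset.univ.filter fun z => t ≤ z ∧ z ≤ x) =
      insert t (Finset.univ.filter fun z => t < z ∧ z ≤ x) := by
    ext y
    simp only [Finset.mem_filter, Finset.mem_univ, true_and, Finset.mem_insert]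
    constructor
    · rintro ⟨h1, h2⟩
      rcases eq_or_lt_of_le h1 with h3 | h3
      · exact Or.inl h3.symm
      · exact Or.inr ⟨h3, h2⟩
    · rintro (rfl | ⟨h1, h2⟩)
      · exact ⟨le_rfl, h.le⟩
      · exact ⟨h1.le, h2⟩
  rw [hset, Finset.sum_insert (by simp), mobHigh_def h]
  ring

lemma weisnerLow (b z x : L) (hbz : b < z) (hzx : z ≤ x) :
    ∑ y ∈ (Finset.univ.filter fun y => b ≤ y ∧ y ≤ x ∧ y ⊔ z = x), mobLow b y = 0 := by
  set G : L → ℤ := fun t => ∑ y ∈ (Finset.univ.filter fun y => b ≤ y ∧ y ⊔ z = t), mobLow b y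
    with hG
  have main : ∀ t : L, z ≤ t → G t = 0 := by
    intro t
    induction t using WellFoundedLT.induction with
    | _ t IH =>
      intro hzt
      have key : ∑ s ∈ (Finset.univ.filter fun s => z ≤ s ∧ s ≤ t), G s = 0 := by
        have maps : ∀ y ∈ (Finset.univ.filter fun y => b ≤ y ∧ y ≤ t),
            y ⊔ z ∈ (Finset.univ.filter fun s => z ≤ s ∧ s ≤ t) := by
          intro y hy
          simp only [Finset.mem_filter, Finset.mem_univ, true_and] at *
          exact ⟨le_sup_right, sup_le hy.2 hzt⟩
        have := Finset.sum_fiberwise_of_maps_to maps (fun y => mobLow b y)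
        have hfib : ∀ s ∈ (Finset.univ.filter fun s => z ≤ s ∧ s ≤ t),
            (Finset.univ.filter fun y => b ≤ y ∧ y ≤ t).filter (fun y => y ⊔ z = s)
            = (Finset.univ.filter fun y => b ≤ y ∧ y ⊔ z = s) := by
          intro s hs
          simp only [Finset.mem_filter, Finset.mem_univ, true_and] at hs
          ext y
          simp only [Finset.mem_filter, Finset.mem_univ, true_and]
          constructor
          · rintro ⟨⟨h1, h2⟩, h3⟩; exact ⟨h1, h3⟩
          · rintro ⟨h1, h2⟩
            exact ⟨⟨h1, le_trans (le_trans le_sup_left h2.le) hs.2⟩, h2⟩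
        calc ∑ s ∈ (Finset.univ.filter fun s => z ≤ s ∧ s ≤ t), G s
            = ∑ s ∈ (Finset.univ.filter fun s => z ≤ s ∧ s ≤ t),
              ∑ y ∈ (Finset.univ.filter fun y => b ≤ y ∧ y ≤ t).filter (fun y => y ⊔ z = s),
                mobLow b y := by
              apply Finset.sum_congr rfl
              intro s hs
              rw [hfib s hs]
          _ = ∑ y ∈ (Finset.univ.filter fun y => b ≤ y ∧ y ≤ t), mobLow b y := this
          _ = 0 := mobLow_sum (lt_of_lt_of_le hbz hzt)
      have ht : t ∈ (Finset.univ.filter fun s => z ≤ s ∧ s ≤ t) := by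
        simp only [Finset.mem_filter, Finset.mem_univ, true_and]
        exact ⟨hzt, le_rfl⟩
      have := Finset.sum_erase_eq_sub (f := G) ht
      have herase : ∑ s ∈ ((Finset.univ.filter fun s => z ≤ s ∧ s ≤ t).erase t), G s = 0 := by
        apply Finset.sum_eq_zero
        intro s hs
        have hs1 := Finset.mem_of_mem_erase hs
        have hs2 := Finset.ne_of_mem_erase hs
        simp only [Finset.mem_filter, Finset.mem_univ, true_and] at hs1
        exact IH s (lt_of_le_of_ne hs1.2 hs2) hs1.1
      rw [herase, key] at this
      linarith
  have hfin : (Finset.univ.filter fun y => b ≤ y ∧ y ≤ x ∧ y ⊔ z = x)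
      = (Finset.univ.filter fun y => b ≤ y ∧ y ⊔ z = x) := by
    ext y
    simp only [Finset.mem_filter, Finset.mem_univ, true_and]
    constructor
    · rintro ⟨h1, h2, h3⟩; exact ⟨h1, h3⟩
    · rintro ⟨h1, h2⟩; exact ⟨h1, le_trans le_sup_left h2.le, h2⟩
  rw [hfin]
  exact main x hzx

lemma weisnerHigh (b m x : L) (hbm : b ≤ m) (hmx : m < x) :
    ∑ y ∈ (Finset.univ.filter fun y => b ≤ y ∧ y ≤ x ∧ y ⊓ m = b), mobHigh y x = 0 := by
  set G : L → ℤ := fun t => ∑ y ∈ (Finset.univ.filter fun y => y ≤ x ∧ y ⊓ m = t), mobHigh y x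
    with hG
  have main : ∀ t : L, t ≤ m → G t = 0 := by
    intro t
    induction t using WellFoundedGT.induction with
    | _ t IH =>
      intro htm
      have key : ∑ s ∈ (Finset.univ.filter fun s => t ≤ s ∧ s ≤ m), G s = 0 := by
        have maps : ∀ y ∈ (Finset.univ.filter fun y => t ≤ y ∧ y ≤ x),
            y ⊓ m ∈ (Finset.univ.filter fun s => t ≤ s ∧ s ≤ m) := by
          intro y hy
          simp only [Finset.mem_filter, Finset.mem_univ, true_and] at *
          exact ⟨le_inf hy.1 htm, inf_le_right⟩
        have := Finset.sum_fiberwise_of_maps_to maps (fun y => mobHigh y x)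
        have hfib : ∀ s ∈ (Finset.univ.filter fun s => t ≤ s ∧ s ≤ m),
            (Finset.univ.filter fun y => t ≤ y ∧ y ≤ x).filter (fun y => y ⊓ m = s)
            = (Finset.univ.filter fun y => y ≤ x ∧ y ⊓ m = s) := by
          intro s hs
          simp only [Finset.mem_filter, Finset.mem_univ, true_and] at hs
          ext y
          simp only [Finset.mem_filter, Finset.mem_univ, true_and]
          constructor
          · rintro ⟨⟨h1, h2⟩, h3⟩; exact ⟨h2, h3⟩
          · rintro ⟨h1, h2⟩
            exact ⟨⟨le_trans hs.1 (le_trans h2.ge inf_le_left), h1⟩, h2⟩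
        calc ∑ s ∈ (Finset.univ.filter fun s => t ≤ s ∧ s ≤ m), G s
            = ∑ s ∈ (Finset.univ.filter fun s => t ≤ s ∧ s ≤ m),
              ∑ y ∈ (Finset.univ.filter fun y => t ≤ y ∧ y ≤ x).filter (fun y => y ⊓ m = s),
                mobHigh y x := by
              apply Finset.sum_congr rfl
              intro s hs
              rw [hfib s hs]
          _ = ∑ y ∈ (Finset.univ.filter fun y => t ≤ y ∧ y ≤ x), mobHigh y x := this
          _ = 0 := mobHigh_sum (lt_of_le_of_lt htm hmx)
      have ht : t ∈ (Finset.univ.filter fun s => t ≤ s ∧ s ≤ m) := by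
        simp only [Finset.mem_filter, Finset.mem_univ, true_and]
        exact ⟨le_rfl, htm⟩
      have := Finset.sum_erase_eq_sub (f := G) ht
      have herase : ∑ s ∈ ((Finset.univ.filter fun s => t ≤ s ∧ s ≤ m).erase t), G s = 0 := by
        apply Finset.sum_eq_zero
        intro s hs
        have hs1 := Finset.mem_of_mem_erase hs
        have hs2 := Finset.ne_of_mem_erase hs
        simp only [Finset.mem_filter, Finset.mem_univ, true_and] at hs1
        exact IH s (lt_of_le_of_ne hs1.1 (Ne.symm hs2)) hs1.2
      rw [herase, key] at this
      linarith
  have hfin : (Finset.univ.filter fun y => b ≤ y ∧ y ≤ x ∧ y ⊓ m = b)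
      = (Finset.univ.filter fun y => y ≤ x ∧ y ⊓ m = b) := by
    ext y
    simp only [Finset.mem_filter, Finset.mem_univ, true_and]
    constructor
    · rintro ⟨h1, h2, h3⟩; exact ⟨h2, h3⟩
    · rintro ⟨h1, h2⟩; exact ⟨le_trans h2.ge inf_le_left, h1, h2⟩
  rw [hfin]
  exact main b hbm

end Mob

section Rank
variable {L : Type*} [Lattice L] [BoundedOrder L] [Fintype L]

lemma old_exists_maximal {α : Type*} [Preorder α] (s : Finset α) (h : s.Nonempty) :
    ∃ m ∈ s, ∀ x ∈ s, ¬m < x := by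
  obtain ⟨i, hi⟩ := Finset.exists_maximal h
  exact ⟨i, hi.prop, fun x hx hlt => hlt.not_ge (hi.le_of_ge hx hlt.le)⟩

lemma old_exists_minimal {α : Type*} [Preorder α] (s : Finset α) (h : s.Nonempty) :
    ∃ m ∈ s, ∀ x ∈ s, ¬x < m := by
  obtain ⟨i, hi⟩ := Finset.exists_minimal h
  exact ⟨i, hi.prop, fun x hx hlt => hlt.not_ge (hi.le_of_le hx hlt.le)⟩

def GCov (r : L → ℕ) : Prop := ∀ x y : L, x ⋖ y → r y = r x + 1
def GMod (r : L → ℕ) : Prop := ∀ x y : L, r x + r y = r (x ⊓ y) + r (x ⊔ y)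
def GAtomic (L : Type*) [Lattice L] [BoundedOrder L] : Prop :=
  ∀ x : L, ∃ S : Finset L, (∀ a ∈ S, IsAtom a) ∧ x = S.sup id

lemma grk_lt {r : L → ℕ} (hcov : GCov r) : ∀ y x : L, x < y → r x < r y := by
  intro y
  induction y using WellFoundedLT.induction with
  | _ y IH =>
    intro x hxy
    obtain ⟨z, hz, hzmax⟩ := old_exists_maximal
      (Finset.univ.filter fun z => x ≤ z ∧ z < y) (⟨x, by simp [hxy]⟩)
    simp only [Finset.mem_filter, Finset.mem_univ, true_and] at hz
    have hcovzy : z ⋖ y := by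
      refine ⟨hz.2, fun w hw hw' => ?_⟩
      refine hzmax w ?_ hw
      simp only [Finset.mem_filter, Finset.mem_univ, true_and]
      exact ⟨le_trans hz.1 hw.le, hw'⟩
    have hr := hcov z y hcovzy
    rcases eq_or_lt_of_le hz.1 with rfl | h
    · omega
    · have := IH z hz.2 x h
      omega

lemma grk_le {r : L → ℕ} (hcov : GCov r) {x y : L} (h : x ≤ y) : r x ≤ r y := by
  rcases eq_or_lt_of_le h with rfl | h
  · exact le_rfl
  · exact (grk_lt hcov y x h).le

lemma grk_eq_of_le {r : L → ℕ} (hcov : GCov r) {x y : L} (hxy : x ≤ y) (hr : r y ≤ r x) :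
    x = y := by
  rcases eq_or_lt_of_le hxy with h | h
  · exact h
  · exact absurd (grk_lt hcov y x h) (by omega)

lemma grk_atom {r : L → ℕ} (hbot : r ⊥ = 0) (hcov : GCov r) {a : L} (ha : IsAtom a) :
    r a = 1 := by
  have h := hcov ⊥ a ha.bot_covBy
  omega

lemma gatom_of_rank {r : L → ℕ} (hbot : r ⊥ = 0) (hcov : GCov r) {a : L} (ha : r a = 1) :
    IsAtom a := by
  constructor
  · intro h
    rw [h, hbot] at ha; omega
  · intro b hb
    have hb1 : r b < 1 := ha ▸ grk_lt hcov a b hb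
    exact (grk_eq_of_le hcov (bot_le : ⊥ ≤ b) (by rw [hbot]; omega)).symm

lemma grk_coatom {r : L → ℕ} (hcov : GCov r) {c : L} (hc : IsCoatom c) : r c + 1 = r ⊤ := by
  have hlt : c < ⊤ := lt_of_le_of_ne le_top hc.1
  have hcc : c ⋖ (⊤ : L) := ⟨hlt, fun w hw hw' => hw'.ne (hc.2 w hw)⟩
  have := hcov c ⊤ hcc
  omega

lemma gcoatom_of_rank {r : L → ℕ} (hcov : GCov r) {c : L} (hc : r c + 1 = r ⊤) :
    IsCoatom c := by
  constructor
  · intro h; rw [h] at hc; omega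
  · intro w hw
    have h1 : r c < r w := grk_lt hcov w c hw
    have h2 : r w ≤ r ⊤ := grk_le hcov (le_top : w ≤ ⊤)
    exact grk_eq_of_le hcov (le_top : w ≤ ⊤) (by omega)

lemma ginf_atom_bot {a x : L} (ha : IsAtom a) (hax : ¬ a ≤ x) : x ⊓ a = ⊥ := by
  rcases eq_or_lt_of_le (inf_le_right : x ⊓ a ≤ a) with h | h
  · exact absurd (h ▸ (inf_le_left : x ⊓ a ≤ x)) hax
  · exact ha.2 _ h

lemma grk_sup_atom {r : L → ℕ} (hbot : r ⊥ = 0) (hcov : GCov r) (hmod : GMod r)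
    {a x : L} (ha : IsAtom a) (hax : ¬ a ≤ x) : r (x ⊔ a) = r x + 1 := by
  have h1 := hmod x a
  rw [ginf_atom_bot ha hax, hbot, grk_atom hbot hcov ha] at h1
  omega

lemma gatom_sep (hatomic : GAtomic L) {x y : L} (h : ¬ y ≤ x) :
    ∃ a : L, IsAtom a ∧ a ≤ y ∧ ¬ a ≤ x := by
  obtain ⟨S, hS, rfl⟩ := hatomic y
  by_contra hcon
  push_neg at hcon
  apply h
  apply Finset.sup_le
  intro a haS
  exact hcon a (hS a haS) (Finset.le_sup (f := id) haS)

lemma gexists_compl {r : L → ℕ} (hbot : r ⊥ = 0) (hcov : GCov r) (hmod : GMod r)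
    (hatomic : GAtomic L) {b z x w : L} (hbz : b ⋖ z) (hzx : z ≤ x) (hbw : b ≤ w)
    (hwx : w ≤ x) (hwz : w ⊓ z = b) :
    ∃ y : L, w ≤ y ∧ y ≤ x ∧ y ⊓ z = b ∧ y ⊔ z = x := by
  obtain ⟨y, hy, hymax⟩ := old_exists_maximal
    (Finset.univ.filter fun y => w ≤ y ∧ y ≤ x ∧ ¬ z ≤ y)
    ⟨w, by
      simp only [Finset.mem_filter, Finset.mem_univ, true_and]
      refine ⟨le_rfl, hwx, fun h => ?_⟩
      have h2 : z ≤ w ⊓ z := le_inf h le_rfl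
      rw [hwz] at h2
      exact absurd (le_antisymm h2 hbz.1.le).symm hbz.1.ne⟩
  simp only [Finset.mem_filter, Finset.mem_univ, true_and] at hy
  obtain ⟨hwy, hyx, hzy⟩ := hy
  have hby : b ≤ y := le_trans hbw hwy
  have hyzb : y ⊓ z = b := by
    have h1 : y ⊓ z < z := lt_of_le_of_ne inf_le_right (fun h => hzy (h ▸ inf_le_left))
    have h2 : b ≤ y ⊓ z := le_inf hby hbz.1.le
    by_contra hne
    exact hbz.2 (lt_of_le_of_ne h2 (Ne.symm hne)) h1
  refine ⟨y, hwy, hyx, hyzb, ?_⟩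
  by_contra hne
  have hyzx : ¬ x ≤ y ⊔ z := fun h => hne (le_antisymm (sup_le hyx hzx) h)
  obtain ⟨a, ha, hax, hayz⟩ := gatom_sep hatomic hyzx
  have hay : ¬ a ≤ y := fun h => hayz (le_trans h le_sup_left)
  have h1 : r (y ⊔ a) = r y + 1 := grk_sup_atom hbot hcov hmod ha hay
  have h2 : r (y ⊔ z) = r y + 1 := by
    have h3 := hmod y z
    rw [hyzb] at h3
    have hrz := hcov b z hbz
    omega
  have hle : y ⊔ z ≤ y ⊔ a → False := by
    intro h
    have heq : y ⊔ z = y ⊔ a := grk_eq_of_le hcov h (by omega)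
    exact hayz (heq ▸ le_sup_right)
  have hzya : ¬ z ≤ y ⊔ a := fun h => hle (sup_le le_sup_left h)
  have hmem : y ⊔ a ∈ (Finset.univ.filter fun y' => w ≤ y' ∧ y' ≤ x ∧ ¬ z ≤ y') := by
    simp only [Finset.mem_filter, Finset.mem_univ, true_and]
    exact ⟨le_trans hwy le_sup_left, sup_le hyx hax, hzya⟩
  exact hymax _ hmem (lt_of_le_of_ne le_sup_left (fun h => hay (h ▸ le_sup_right)))

lemma gexists_cover_le {b x : L} (h : b < x) : ∃ z : L, b ⋖ z ∧ z ≤ x := by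
  obtain ⟨z, hz, hzmin⟩ := old_exists_minimal
    (Finset.univ.filter fun z => b < z ∧ z ≤ x) ⟨x, by simp [h]⟩
  simp only [Finset.mem_filter, Finset.mem_univ, true_and] at hz
  refine ⟨z, ⟨hz.1, fun w hw hw' => ?_⟩, hz.2⟩
  refine hzmin w ?_ hw'
  simp only [Finset.mem_filter, Finset.mem_univ, true_and]
  exact ⟨hw, le_trans hw'.le hz.2⟩

lemma gexists_le_cover {y x : L} (h : y < x) : ∃ m : L, y ≤ m ∧ m ⋖ x := by
  obtain ⟨m, hm, hmmax⟩ := old_exists_maximal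
    (Finset.univ.filter fun m => y ≤ m ∧ m < x) ⟨y, by simp [h]⟩
  simp only [Finset.mem_filter, Finset.mem_univ, true_and] at hm
  refine ⟨m, hm.1, hm.2, fun w hw hw' => ?_⟩
  refine hmmax w ?_ hw
  simp only [Finset.mem_filter, Finset.mem_univ, true_and]
  exact ⟨le_trans hm.1 hw.le, hw'⟩

end Rank

section Alt
variable {L : Type*} [Lattice L] [BoundedOrder L] [Fintype L]

lemma mobLow_sign {r : L → ℕ} (hbot : r ⊥ = 0) (hcov : GCov r) (hmod : GMod r)
    (hatomic : GAtomic L) :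
    ∀ x b : L, b ≤ x → ∀ k : ℕ, r x = r b + k → 0 < (-1 : ℤ) ^ k * mobLow b x := by
  intro x
  induction x using WellFoundedLT.induction with
  | _ x IH =>
    intro b hbx k hk
    rcases eq_or_lt_of_le hbx with rfl | hlt
    · have hk0 : k = 0 := by omega
      subst hk0
      rw [mobLow_self]
      norm_num
    · have hrb : r b < r x := grk_lt hcov x b hlt
      obtain ⟨k', rfl⟩ : ∃ k', k = k' + 1 := ⟨k - 1, by omega⟩
      obtain ⟨z, hbz, hzx⟩ := gexists_cover_le hlt
      have hW := weisnerLow b z x hbz.1 hzx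
      set S := (Finset.univ.filter fun y => b ≤ y ∧ y ≤ x ∧ y ⊔ z = x) with hS
      have hxS : x ∈ S := by
        simp only [hS, Finset.mem_filter, Finset.mem_univ, true_and]
        exact ⟨hbx, le_rfl, sup_eq_left.mpr hzx⟩
      have hsub := Finset.sum_erase_eq_sub (f := fun y => mobLow b y) hxS
      rw [hW] at hsub
      -- mobLow b x = - sum over erase
      have hmx : mobLow b x = - ∑ y ∈ S.erase x, mobLow b y := by
        try simp only at hsub
        omega
      -- each y in S.erase x has b ≤ y, y < x, r y = r b + k'
      have hmem : ∀ y ∈ S.erase x, b ≤ y ∧ y < x ∧ r y = r b + k' := by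
        intro y hy
        have hy1 := Finset.mem_of_mem_erase hy
        have hy2 := Finset.ne_of_mem_erase hy
        simp only [hS, Finset.mem_filter, Finset.mem_univ, true_and] at hy1
        obtain ⟨hby, hyx, hyz⟩ := hy1
        have hzyn : ¬ z ≤ y := fun h => hy2 (by rw [← hyz, sup_eq_left.mpr h])
        have hyzb : y ⊓ z = b := by
          have h1 : y ⊓ z < z := lt_of_le_of_ne inf_le_right (fun h => hzyn (h ▸ inf_le_left))
          have h2 : b ≤ y ⊓ z := le_inf hby hbz.1.le
          by_contra hne
          exact hbz.2 (lt_of_le_of_ne h2 (Ne.symm hne)) h1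
        have hm := hmod y z
        rw [hyzb, hyz] at hm
        have hrz := hcov b z hbz
        exact ⟨hby, lt_of_le_of_ne hyx hy2, by omega⟩
      have hne : (S.erase x).Nonempty := by
        obtain ⟨y, hy1, hy2, hy3, hy4⟩ := gexists_compl hbot hcov hmod hatomic hbz hzx
          (le_refl b) (le_trans hbz.1.le hzx) (inf_eq_left.mpr hbz.1.le)
        refine ⟨y, Finset.mem_erase.mpr ⟨?_, ?_⟩⟩
        · intro h
          subst h
          rw [inf_eq_right.mpr hzx] at hy3
          exact hbz.1.ne (hy3.symm) 
        · simp only [hS, Finset.mem_filter, Finset.mem_univ, true_and]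
          exact ⟨hy1, hy2, hy4⟩
      have hpos : 0 < ∑ y ∈ S.erase x, (-1 : ℤ) ^ k' * mobLow b y := by
        apply Finset.sum_pos
        · intro y hy
          obtain ⟨h1, h2, h3⟩ := hmem y hy
          exact IH y h2 b h1 k' h3
        · exact hne
      rw [← Finset.mul_sum] at hpos
      have : (0 : ℤ) < (-1) ^ (k' + 1) * mobLow b x := by
        rw [hmx]
        have : (-1 : ℤ) ^ (k' + 1) * -∑ y ∈ S.erase x, mobLow b y
            = (-1 : ℤ) ^ k' * ∑ y ∈ S.erase x, mobLow b y := by ring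
        rw [this]
        exact hpos
      exact this

lemma mobHigh_sign {r : L → ℕ} (hbot : r ⊥ = 0) (hcov : GCov r) (hmod : GMod r)
    (hatomic : GAtomic L) (x : L) :
    ∀ y : L, y ≤ x → ∀ k : ℕ, r x = r y + k → 0 < (-1 : ℤ) ^ k * mobHigh y x := by
  intro y
  induction y using WellFoundedGT.induction with
  | _ y IH =>
    intro hyx k hk
    rcases eq_or_lt_of_le hyx with rfl | hlt
    · have hk0 : k = 0 := by omega
      subst hk0
      rw [mobHigh_self]
      norm_num
    · have hry : r y < r x := grk_lt hcov x y hlt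
      obtain ⟨k', rfl⟩ : ∃ k', k = k' + 1 := ⟨k - 1, by omega⟩
      obtain ⟨m, hym, hmx⟩ := gexists_le_cover hlt
      have hrm := hcov m x hmx
      rcases eq_or_lt_of_le hym with rfl | hym'
      · -- y ⋖ x : direct computation
        have hk0 : k' = 0 := by omega
        subst hk0
        have hsum := mobHigh_sum hlt
        have hset : (Finset.univ.filter fun z => y ≤ z ∧ z ≤ x) = {y, x} := by
          ext w
          simp only [Finset.mem_filter, Finset.mem_univ, true_and, Finset.mem_insert,
            Finset.mem_singleton]
          constructor
          · rintro ⟨h1, h2⟩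
            rcases eq_or_lt_of_le h1 with h3 | h3
            · exact Or.inl h3.symm
            · right
              by_contra hne
              exact hmx.2 h3 (lt_of_le_of_ne h2 hne)
          · rintro (rfl | rfl)
            · exact ⟨le_rfl, hyx⟩
            · exact ⟨hyx, le_rfl⟩
        rw [hset, Finset.sum_pair hlt.ne, mobHigh_self] at hsum
        have : mobHigh y x = -1 := by omega
        rw [this]
        norm_num
      · -- y < m ⋖ x
        have hW := weisnerHigh y m x hym'.le hmx.1
        set S := (Finset.univ.filter fun w => y ≤ w ∧ w ≤ x ∧ w ⊓ m = y) with hS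
        have hyS : y ∈ S := by
          simp only [hS, Finset.mem_filter, Finset.mem_univ, true_and]
          exact ⟨le_rfl, hyx, inf_eq_left.mpr hym'.le⟩
        have hsub := Finset.sum_erase_eq_sub (f := fun w => mobHigh w x) hyS
        rw [hW] at hsub
        have hmy : mobHigh y x = - ∑ w ∈ S.erase y, mobHigh w x := by
          try simp only at hsub
          omega
        have hmem : ∀ w ∈ S.erase y, y < w ∧ w ≤ x ∧ r x = r w + k' := by
          intro w hw
          have hw1 := Finset.mem_of_mem_erase hw
          have hw2 := Finset.ne_of_mem_erase hw
          simp only [hS, Finset.mem_filter, Finset.mem_univ, true_and] at hw1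
          obtain ⟨hyw, hwx, hwm⟩ := hw1
          have hwm' : ¬ w ≤ m := fun h => hw2 (by rw [← hwm, inf_eq_left.mpr h])
          have hwsup : w ⊔ m = x := by
            have h1 : m < w ⊔ m := lt_of_le_of_ne le_sup_right
              (fun h => hwm' (h ▸ le_sup_left))
            by_contra hne
            exact hmx.2 h1 (lt_of_le_of_ne (sup_le hwx hmx.1.le) hne)
          have hm2 := hmod w m
          rw [hwm, hwsup] at hm2
          exact ⟨lt_of_le_of_ne hyw (Ne.symm hw2), hwx, by omega⟩
        have hne : (S.erase y).Nonempty := by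
          obtain ⟨a, ha, hax, ham⟩ := gatom_sep hatomic (x := m) (y := x)
            (fun h => absurd (le_antisymm hmx.1.le h) hmx.1.ne)
          have hay : ¬ a ≤ y := fun h => ham (le_trans h hym'.le)
          have hw0 : r (y ⊔ a) = r y + 1 := grk_sup_atom hbot hcov hmod ha hay
          refine ⟨y ⊔ a, Finset.mem_erase.mpr ⟨?_, ?_⟩⟩
          · intro h
            exact hay (h ▸ le_sup_right)
          · simp only [hS, Finset.mem_filter, Finset.mem_univ, true_and]
            refine ⟨le_sup_left, sup_le hyx hax, ?_⟩
            have h1 : y ≤ (y ⊔ a) ⊓ m := le_inf le_sup_left hym'.le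
            have h2 : (y ⊔ a) ⊓ m ≠ y ⊔ a := fun h =>
              ham (le_trans (le_trans le_sup_right h.symm.le) inf_le_right)
            have h3 : (y ⊔ a) ⊓ m < y ⊔ a := lt_of_le_of_ne inf_le_left h2
            have h4 : r ((y ⊔ a) ⊓ m) < r y + 1 := hw0 ▸ grk_lt hcov _ _ h3
            exact (grk_eq_of_le hcov h1 (by omega)).symm
        have hpos : 0 < ∑ w ∈ S.erase y, (-1 : ℤ) ^ k' * mobHigh w x := by
          apply Finset.sum_pos
          · intro w hw
            obtain ⟨h1, h2, h3⟩ := hmem w hw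
            exact IH w h1 h2 k' h3
          · exact hne
        rw [← Finset.mul_sum] at hpos
        have : (0 : ℤ) < (-1) ^ (k' + 1) * mobHigh y x := by
          rw [hmy]
          have heq : (-1 : ℤ) ^ (k' + 1) * -∑ w ∈ S.erase y, mobHigh w x
              = (-1 : ℤ) ^ k' * ∑ w ∈ S.erase y, mobHigh w x := by ring
          rw [heq]
          exact hpos
        exact this

lemma mobLow_top_ne {r : L → ℕ} (hbot : r ⊥ = 0) (hcov : GCov r) (hmod : GMod r)
    (hatomic : GAtomic L) (b : L) : mobLow b (⊤ : L) ≠ 0 := by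
  have h1 : r b ≤ r ⊤ := grk_le hcov le_top
  have := mobLow_sign hbot hcov hmod hatomic ⊤ b le_top (r ⊤ - r b) (by omega)
  intro h
  rw [h] at this
  simp at this

lemma mobHigh_bot_ne {r : L → ℕ} (hbot : r ⊥ = 0) (hcov : GCov r) (hmod : GMod r)
    (hatomic : GAtomic L) (d : L) : mobHigh (⊥ : L) d ≠ 0 := by
  have h1 : r ⊥ ≤ r d := grk_le hcov bot_le
  have := mobHigh_sign hbot hcov hmod hatomic d ⊥ bot_le (r d - r ⊥) (by omega)
  intro h
  rw [h] at this
  simp at this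

end Alt

section Ident
variable {L : Type*} [Lattice L] [BoundedOrder L] [Fintype L]

lemma atom_le_atom {a b : L} (ha : IsAtom a) (hb : IsAtom b) (h : a ≤ b) : a = b := by
  rcases eq_or_lt_of_le h with h | h
  · exact h
  · exact absurd (hb.2 a h) ha.1

lemma identI {r : L → ℕ} (hbot : r ⊥ = 0) (hcov : GCov r) (hmod : GMod r)
    {a b : L} (ha : IsAtom a) (hb : IsAtom b) (hab : a ≠ b) :
    ∑ c ∈ (Finset.univ.filter fun c => IsCoatom c ∧ b ≤ c ∧ ¬ a ≤ c), mobLow b c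
      = - mobLow b (⊤ : L) := by
  have hba : b < b ⊔ a := by
    refine lt_of_le_of_ne le_sup_left (fun h => ?_)
    exact hab (atom_le_atom ha hb (h ▸ le_sup_right))
  have hW := weisnerLow b (b ⊔ a) ⊤ hba le_top
  have hset : (Finset.univ.filter fun y => b ≤ y ∧ y ≤ ⊤ ∧ y ⊔ (b ⊔ a) = ⊤)
      = insert ⊤ (Finset.univ.filter fun c => IsCoatom c ∧ b ≤ c ∧ ¬ a ≤ c) := by
    ext y
    simp only [Finset.mem_filter, Finset.mem_univ, true_and, Finset.mem_insert]
    constructor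
    · rintro ⟨h1, h2, h3⟩
      by_cases hy : y = ⊤
      · exact Or.inl hy
      · right
        have hya : y ⊔ a = ⊤ := by
          rw [← sup_assoc, sup_eq_left.mpr h1] at h3
          exact h3
        have hay : ¬ a ≤ y := by
          intro h
          rw [sup_eq_left.mpr h] at hya
          exact hy hya
        have hm := hmod y a
        rw [ginf_atom_bot ha hay, hya, hbot, grk_atom hbot hcov ha] at hm
        exact ⟨gcoatom_of_rank hcov (by omega), h1, hay⟩
    · rintro (rfl | ⟨h1, h2, h3⟩)
      · exact ⟨le_top, le_rfl, top_sup_eq _⟩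
      · refine ⟨h2, le_top, ?_⟩
        rw [← sup_assoc, sup_eq_left.mpr h2]
        have : y < y ⊔ a := lt_of_le_of_ne le_sup_left (fun h => h3 (h ▸ le_sup_right))
        exact h1.2 _ this
  rw [hset] at hW
  rw [Finset.sum_insert (by
    simp only [Finset.mem_filter, Finset.mem_univ, true_and]
    rintro ⟨h1, -⟩
    exact h1.1 rfl)] at hW
  linarith

lemma identII {r : L → ℕ} (hbot : r ⊥ = 0) (hcov : GCov r) (hmod : GMod r)
    {c d : L} (hc : IsCoatom c) (hd : IsCoatom d) (hcd : c ≠ d) :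
    ∑ a ∈ (Finset.univ.filter fun a => IsAtom a ∧ a ≤ d ∧ ¬ a ≤ c), mobHigh a d
      = - mobHigh (⊥ : L) d := by
  have hcdlt : c ⊓ d < d := by
    refine lt_of_le_of_ne inf_le_right (fun h => ?_)
    have hdc : d ≤ c := h ▸ inf_le_left
    rcases eq_or_lt_of_le hdc with h2 | h2
    · exact hcd h2.symm
    · exact hc.1 (hd.2 c h2)
  have hW := weisnerHigh ⊥ (c ⊓ d) d bot_le hcdlt
  have hset : (Finset.univ.filter fun y => ⊥ ≤ y ∧ y ≤ d ∧ y ⊓ (c ⊓ d) = ⊥)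
      = insert ⊥ (Finset.univ.filter fun a => IsAtom a ∧ a ≤ d ∧ ¬ a ≤ c) := by
    ext y
    simp only [Finset.mem_filter, Finset.mem_univ, true_and, Finset.mem_insert]
    constructor
    · rintro ⟨-, h2, h3⟩
      by_cases hy : y = ⊥
      · exact Or.inl hy
      · right
        have hyc : y ⊓ c = ⊥ := by
          rw [← inf_assoc] at h3
          rw [inf_eq_left.mpr (le_trans (inf_le_left : y ⊓ c ≤ y) h2)] at h3
          exact h3
        have hm := hmod y c
        rw [hyc, hbot] at hm
        have hyc2 : r (y ⊔ c) ≤ r ⊤ := grk_le hcov le_top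
        have hrc : r c + 1 = r ⊤ := grk_coatom hcov hc
        have hy1 : 1 ≤ r y := by
          rcases Nat.eq_zero_or_pos (r y) with h0 | h0
          · exact absurd (grk_eq_of_le hcov (bot_le : ⊥ ≤ y) (by omega)).symm hy
          · exact h0
        have hatom : IsAtom y := gatom_of_rank hbot hcov (by omega)
        refine ⟨hatom, h2, fun h => ?_⟩
        rw [inf_eq_left.mpr h] at hyc
        exact hatom.1 hyc
    · rintro (rfl | ⟨h1, h2, h3⟩)
      · exact ⟨le_rfl, bot_le, bot_inf_eq _⟩
      · refine ⟨bot_le, h2, ?_⟩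
        rw [← inf_assoc]
        rw [inf_comm y c, ginf_atom_bot h1 h3]
        exact bot_inf_eq _
  rw [hset] at hW
  rw [Finset.sum_insert (by
    simp only [Finset.mem_filter, Finset.mem_univ, true_and]
    rintro ⟨h1, -⟩
    exact h1.1 rfl)] at hW
  linarith

end Ident

section Main
variable {L : Type*} [Lattice L] [BoundedOrder L] [Fintype L]

lemma gA_le_C {r : L → ℕ} (hbot : r ⊥ = 0) (hcov : GCov r) (hmod : GMod r)
    (hatomic : GAtomic L) [Fintype {a : L // IsAtom a}] [Fintype {c : L // IsCoatom c}]
    (hA2 : 2 ≤ Fintype.card {a : L // IsAtom a}) :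
    Fintype.card {a : L // IsAtom a} ≤ Fintype.card {c : L // IsCoatom c} := by
  classical
  let φ : ({a : L // IsAtom a} → ℚ) →ₗ[ℚ] ({c : L // IsCoatom c} → ℚ) :=
    { toFun := fun f c => ∑ a : {a : L // IsAtom a}, (if a.1 ≤ c.1 then 0 else 1) * f a
      map_add' := by
        intro f g
        funext c
        simp [mul_add, Finset.sum_add_distrib]
      map_smul' := by
        intro m f
        funext c
        simp only [RingHom.id_apply, Pi.smul_apply, smul_eq_mul, Finset.mul_sum]
        apply Finset.sum_congr rfl
        intro a _
        ring }
  have hinj : Function.Injective φ := by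
    rw [injective_iff_map_eq_zero]
    intro f hf
    have gval : ∀ b a : {a : L // IsAtom a}, (∑ c : {c : L // IsCoatom c},
        (if b.1 ≤ c.1 then (mobLow b.1 c.1 : ℚ) else 0) * (if a.1 ≤ c.1 then 0 else 1))
        = if a = b then 0 else -(mobLow b.1 (⊤ : L) : ℚ) := by
      intro b a
      have step1 : ∀ c : {c : L // IsCoatom c},
          (if b.1 ≤ c.1 then (mobLow b.1 c.1 : ℚ) else 0) * (if a.1 ≤ c.1 then 0 else 1)
          = if (IsCoatom c.1 ∧ b.1 ≤ c.1 ∧ ¬ a.1 ≤ c.1) then (mobLow b.1 c.1 : ℚ) else 0 := by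
        intro c
        by_cases h1 : b.1 ≤ c.1 <;> by_cases h2 : a.1 ≤ c.1 <;> simp [h1, h2, c.2]
      rw [Finset.sum_congr rfl (fun c _ => step1 c)]
      have step2 : (∑ c : {c : L // IsCoatom c}, if (IsCoatom c.1 ∧ b.1 ≤ c.1 ∧ ¬ a.1 ≤ c.1)
            then (mobLow b.1 c.1 : ℚ) else 0)
          = ∑ c ∈ Finset.univ.filter (fun c : L => IsCoatom c),
              (if (IsCoatom c ∧ b.1 ≤ c ∧ ¬ a.1 ≤ c) then (mobLow b.1 c : ℚ) else 0) :=
        (Finset.sum_subtype (p := fun c : L => IsCoatom c)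
          (f := fun c : L => if (IsCoatom c ∧ b.1 ≤ c ∧ ¬ a.1 ≤ c) then (mobLow b.1 c : ℚ) else 0)
          (Finset.univ.filter (fun c : L => IsCoatom c)) (by simp)).symm
      rw [step2]
      have step3 : (∑ c ∈ Finset.univ.filter (fun c : L => IsCoatom c),
              (if (IsCoatom c ∧ b.1 ≤ c ∧ ¬ a.1 ≤ c) then (mobLow b.1 c : ℚ) else 0))
          = ∑ c ∈ Finset.univ.filter (fun c : L => IsCoatom c ∧ b.1 ≤ c ∧ ¬ a.1 ≤ c),
              (mobLow b.1 c : ℚ) := by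
        rw [Finset.sum_filter, Finset.sum_filter]
        apply Finset.sum_congr rfl
        intro c _
        by_cases h1 : IsCoatom c <;> by_cases h2 : b.1 ≤ c ∧ ¬ a.1 ≤ c <;>
          simp [h1, h2]
      rw [step3]
      by_cases hab : a = b
      · subst hab
        rw [if_pos rfl]
        have hempty : (Finset.univ.filter (fun c : L => IsCoatom c ∧ a.1 ≤ c ∧ ¬ a.1 ≤ c))
            = ∅ := by
          ext c
          simp only [Finset.mem_filter, Finset.mem_univ, true_and, Finset.notMem_empty,
            iff_false]
          rintro ⟨-, h1, h2⟩
          exact h2 h1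
        rw [hempty, Finset.sum_empty]
      · rw [if_neg hab]
        have hab' : a.1 ≠ b.1 := fun h => hab (Subtype.ext h)
        have hid := identI hbot hcov hmod a.2 b.2 hab'
        rw [← Int.cast_sum, hid, Int.cast_neg]
    have key : ∀ b : {a : L // IsAtom a}, ∑ a ∈ (Finset.univ.erase b), f a = 0 := by
      intro b
      have h0 : ∑ c : {c : L // IsCoatom c},
          (if b.1 ≤ c.1 then (mobLow b.1 c.1 : ℚ) else 0) * (φ f c) = 0 := by
        simp [hf]
      have h1 : ∑ c : {c : L // IsCoatom c},
          (if b.1 ≤ c.1 then (mobLow b.1 c.1 : ℚ) else 0) * (φ f c)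
          = ∑ a : {a : L // IsAtom a}, (∑ c : {c : L // IsCoatom c},
              (if b.1 ≤ c.1 then (mobLow b.1 c.1 : ℚ) else 0) * (if a.1 ≤ c.1 then 0 else 1))
                * f a := by
        have expand : ∀ c : {c : L // IsCoatom c},
            (if b.1 ≤ c.1 then (mobLow b.1 c.1 : ℚ) else 0) * (φ f c)
            = ∑ a : {a : L // IsAtom a}, (if b.1 ≤ c.1 then (mobLow b.1 c.1 : ℚ) else 0) *
                ((if a.1 ≤ c.1 then 0 else 1) * f a) := by
          intro c
          show (if b.1 ≤ c.1 then (mobLow b.1 c.1 : ℚ) else 0) *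
              (∑ a : {a : L // IsAtom a}, (if a.1 ≤ c.1 then 0 else 1) * f a) = _
          rw [Finset.mul_sum]
        rw [Finset.sum_congr rfl (fun c _ => expand c), Finset.sum_comm]
        apply Finset.sum_congr rfl
        intro a _
        rw [Finset.sum_mul]
        apply Finset.sum_congr rfl
        intro c _
        ring
      rw [h1] at h0
      rw [Finset.sum_congr rfl (fun a _ => by rw [gval b a])] at h0
      have h2 : ∑ a : {a : L // IsAtom a},
          (if a = b then (0:ℚ) else -(mobLow b.1 (⊤ : L) : ℚ)) * f a
          = -(mobLow b.1 (⊤ : L) : ℚ) * ∑ a ∈ Finset.univ.erase b, f a := by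
        rw [← Finset.sum_erase (Finset.univ)
          (a := b) (f := fun a => (if a = b then (0:ℚ) else -(mobLow b.1 (⊤ : L) : ℚ)) * f a)
          (by simp)]
        rw [Finset.mul_sum]
        apply Finset.sum_congr rfl
        intro a ha
        rw [if_neg (Finset.ne_of_mem_erase ha)]
      rw [h2] at h0
      have hmne : (mobLow b.1 (⊤ : L) : ℚ) ≠ 0 := by
        exact_mod_cast mobLow_top_ne hbot hcov hmod hatomic b.1
      rcases mul_eq_zero.mp h0 with h | h
      · exact absurd h (by simpa using hmne)
      · exact h
    have hfb : ∀ b : {a : L // IsAtom a}, f b = ∑ a : {a : L // IsAtom a}, f a := by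
      intro b
      have hkey := key b
      rw [Finset.sum_erase_eq_sub (Finset.mem_univ b)] at hkey
      linarith
    set S : ℚ := ∑ a : {a : L // IsAtom a}, f a with hs
    have hS : S = (Fintype.card {a : L // IsAtom a} : ℚ) * S := by
      conv_lhs => rw [hs]
      rw [Finset.sum_congr rfl (fun b _ => hfb b), Finset.sum_const, Finset.card_univ]
      simp [mul_comm]
    have hSzero : S = 0 := by
      have hcard : (2 : ℚ) ≤ (Fintype.card {a : L // IsAtom a} : ℚ) := by exact_mod_cast hA2
      nlinarith [hS]
    funext b
    rw [hfb b, hSzero]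
    simp
  calc Fintype.card {a : L // IsAtom a} = Module.finrank ℚ ({a : L // IsAtom a} → ℚ) :=
        (Module.finrank_fintype_fun_eq_card ℚ).symm
    _ ≤ Module.finrank ℚ ({c : L // IsCoatom c} → ℚ) :=
        LinearMap.finrank_le_finrank_of_injective hinj
    _ = Fintype.card {c : L // IsCoatom c} := Module.finrank_fintype_fun_eq_card ℚ

lemma gC_le_A {r : L → ℕ} (hbot : r ⊥ = 0) (hcov : GCov r) (hmod : GMod r)
    (hatomic : GAtomic L) [Fintype {a : L // IsAtom a}] [Fintype {c : L // IsCoatom c}]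
    (hC2 : 2 ≤ Fintype.card {c : L // IsCoatom c}) :
    Fintype.card {c : L // IsCoatom c} ≤ Fintype.card {a : L // IsAtom a} := by
  classical
  let ψ : ({c : L // IsCoatom c} → ℚ) →ₗ[ℚ] ({a : L // IsAtom a} → ℚ) :=
    { toFun := fun g a => ∑ c : {c : L // IsCoatom c}, (if a.1 ≤ c.1 then 0 else 1) * g c
      map_add' := by
        intro f g
        funext a
        simp [mul_add, Finset.sum_add_distrib]
      map_smul' := by
        intro m g
        funext a
        simp only [RingHom.id_apply, Pi.smul_apply, smul_eq_mul, Finset.mul_sum]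
        apply Finset.sum_congr rfl
        intro c _
        ring }
  have hinj : Function.Injective ψ := by
    rw [injective_iff_map_eq_zero]
    intro g hg
    have gval : ∀ d c : {c : L // IsCoatom c}, (∑ a : {a : L // IsAtom a},
        (if a.1 ≤ d.1 then (mobHigh a.1 d.1 : ℚ) else 0) * (if a.1 ≤ c.1 then 0 else 1))
        = if c = d then 0 else -(mobHigh (⊥ : L) d.1 : ℚ) := by
      intro d c
      have step1 : ∀ a : {a : L // IsAtom a},
          (if a.1 ≤ d.1 then (mobHigh a.1 d.1 : ℚ) else 0) * (if a.1 ≤ c.1 then 0 else 1)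
          = if (IsAtom a.1 ∧ a.1 ≤ d.1 ∧ ¬ a.1 ≤ c.1) then (mobHigh a.1 d.1 : ℚ) else 0 := by
        intro a
        by_cases h1 : a.1 ≤ d.1 <;> by_cases h2 : a.1 ≤ c.1 <;> simp [h1, h2, a.2]
      rw [Finset.sum_congr rfl (fun a _ => step1 a)]
      have step2 : (∑ a : {a : L // IsAtom a}, if (IsAtom a.1 ∧ a.1 ≤ d.1 ∧ ¬ a.1 ≤ c.1)
            then (mobHigh a.1 d.1 : ℚ) else 0)
          = ∑ a ∈ Finset.univ.filter (fun a : L => IsAtom a),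
              (if (IsAtom a ∧ a ≤ d.1 ∧ ¬ a ≤ c.1) then (mobHigh a d.1 : ℚ) else 0) :=
        (Finset.sum_subtype (p := fun a : L => IsAtom a)
          (f := fun a : L => if (IsAtom a ∧ a ≤ d.1 ∧ ¬ a ≤ c.1) then (mobHigh a d.1 : ℚ) else 0)
          (Finset.univ.filter (fun a : L => IsAtom a)) (by simp)).symm
      rw [step2]
      have step3 : (∑ a ∈ Finset.univ.filter (fun a : L => IsAtom a),
              (if (IsAtom a ∧ a ≤ d.1 ∧ ¬ a ≤ c.1) then (mobHigh a d.1 : ℚ) else 0))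
          = ∑ a ∈ Finset.univ.filter (fun a : L => IsAtom a ∧ a ≤ d.1 ∧ ¬ a ≤ c.1),
              (mobHigh a d.1 : ℚ) := by
        rw [Finset.sum_filter, Finset.sum_filter]
        apply Finset.sum_congr rfl
        intro a _
        by_cases h1 : IsAtom a <;> by_cases h2 : a ≤ d.1 ∧ ¬ a ≤ c.1 <;>
          simp [h1, h2]
      rw [step3]
      by_cases hcd : c = d
      · subst hcd
        rw [if_pos rfl]
        have hempty : (Finset.univ.filter (fun a : L => IsAtom a ∧ a ≤ c.1 ∧ ¬ a ≤ c.1))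
            = ∅ := by
          ext a
          simp only [Finset.mem_filter, Finset.mem_univ, true_and, Finset.notMem_empty,
            iff_false]
          rintro ⟨-, h1, h2⟩
          exact h2 h1
        rw [hempty, Finset.sum_empty]
      · rw [if_neg hcd]
        have hcd' : c.1 ≠ d.1 := fun h => hcd (Subtype.ext h)
        have hid := identII hbot hcov hmod c.2 d.2 hcd'
        rw [← Int.cast_sum, hid, Int.cast_neg]
    have key : ∀ d : {c : L // IsCoatom c}, ∑ c ∈ (Finset.univ.erase d), g c = 0 := by
      intro d
      have h0 : ∑ a : {a : L // IsAtom a},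
          (if a.1 ≤ d.1 then (mobHigh a.1 d.1 : ℚ) else 0) * (ψ g a) = 0 := by
        simp [hg]
      have h1 : ∑ a : {a : L // IsAtom a},
          (if a.1 ≤ d.1 then (mobHigh a.1 d.1 : ℚ) else 0) * (ψ g a)
          = ∑ c : {c : L // IsCoatom c}, (∑ a : {a : L // IsAtom a},
              (if a.1 ≤ d.1 then (mobHigh a.1 d.1 : ℚ) else 0) * (if a.1 ≤ c.1 then 0 else 1))
                * g c := by
        have expand : ∀ a : {a : L // IsAtom a},
            (if a.1 ≤ d.1 then (mobHigh a.1 d.1 : ℚ) else 0) * (ψ g a)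
            = ∑ c : {c : L // IsCoatom c}, (if a.1 ≤ d.1 then (mobHigh a.1 d.1 : ℚ) else 0) *
                ((if a.1 ≤ c.1 then 0 else 1) * g c) := by
          intro a
          show (if a.1 ≤ d.1 then (mobHigh a.1 d.1 : ℚ) else 0) *
              (∑ c : {c : L // IsCoatom c}, (if a.1 ≤ c.1 then 0 else 1) * g c) = _
          rw [Finset.mul_sum]
        rw [Finset.sum_congr rfl (fun a _ => expand a), Finset.sum_comm]
        apply Finset.sum_congr rfl
        intro c _
        rw [Finset.sum_mul]
        apply Finset.sum_congr rfl
        intro a _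
        ring
      rw [h1] at h0
      rw [Finset.sum_congr rfl (fun c _ => by rw [gval d c])] at h0
      have h2 : ∑ c : {c : L // IsCoatom c},
          (if c = d then (0:ℚ) else -(mobHigh (⊥ : L) d.1 : ℚ)) * g c
          = -(mobHigh (⊥ : L) d.1 : ℚ) * ∑ c ∈ Finset.univ.erase d, g c := by
        rw [← Finset.sum_erase (Finset.univ)
          (a := d) (f := fun c => (if c = d then (0:ℚ) else -(mobHigh (⊥ : L) d.1 : ℚ)) * g c)
          (by simp)]
        rw [Finset.mul_sum]
        apply Finset.sum_congr rfl
        intro c hc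
        rw [if_neg (Finset.ne_of_mem_erase hc)]
      rw [h2] at h0
      have hmne : (mobHigh (⊥ : L) d.1 : ℚ) ≠ 0 := by
        exact_mod_cast mobHigh_bot_ne hbot hcov hmod hatomic d.1
      rcases mul_eq_zero.mp h0 with h | h
      · exact absurd h (by simpa using hmne)
      · exact h
    have hfb : ∀ d : {c : L // IsCoatom c}, g d = ∑ c : {c : L // IsCoatom c}, g c := by
      intro d
      have hkey := key d
      rw [Finset.sum_erase_eq_sub (Finset.mem_univ d)] at hkey
      linarith
    set S : ℚ := ∑ c : {c : L // IsCoatom c}, g c with hs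
    have hS : S = (Fintype.card {c : L // IsCoatom c} : ℚ) * S := by
      conv_lhs => rw [hs]
      rw [Finset.sum_congr rfl (fun d _ => hfb d), Finset.sum_const, Finset.card_univ]
      simp [mul_comm]
    have hSzero : S = 0 := by
      have hcard : (2 : ℚ) ≤ (Fintype.card {c : L // IsCoatom c} : ℚ) := by exact_mod_cast hC2
      nlinarith [hS]
    funext d
    rw [hfb d, hSzero]
    simp
  calc Fintype.card {c : L // IsCoatom c} = Module.finrank ℚ ({c : L // IsCoatom c} → ℚ) :=
        (Module.finrank_fintype_fun_eq_card ℚ).symm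
    _ ≤ Module.finrank ℚ ({a : L // IsAtom a} → ℚ) :=
        LinearMap.finrank_le_finrank_of_injective hinj
    _ = Fintype.card {a : L // IsAtom a} := Module.finrank_fintype_fun_eq_card ℚ

end Main

/-- Greene, one direction: a finite geometric lattice (graded, atomic,
upper semimodular) which is modular has as many atoms as coatoms. -/
theorem card_atoms_eq_card_coatoms_of_modular {L : Type*} [Lattice L] [BoundedOrder L]
    [Fintype L] (r : L → ℕ)
    (hbot : r ⊥ = 0)
    (hcov : ∀ x y : L, x ⋖ y → r y = r x + 1)
    (hatomic : ∀ x : L, ∃ S : Finset L, (∀ a ∈ S, IsAtom a) ∧ x = S.sup id)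
    (hsemimod : ∀ x y : L, r (x ⊓ y) + r (x ⊔ y) ≤ r x + r y)
    (hmod : ∀ x y : L, r x + r y = r (x ⊓ y) + r (x ⊔ y)) :
    Nat.card {a : L // IsAtom a} = Nat.card {a : L // IsCoatom a} := by
  classical
  have hcov' : GCov r := hcov
  have hmod' : GMod r := hmod
  have hatomic' : GAtomic L := hatomic
  letI instA : Fintype {a : L // IsAtom a} := Fintype.ofFinite _
  letI instC : Fintype {c : L // IsCoatom c} := Fintype.ofFinite _
  rw [Nat.card_eq_fintype_card, Nat.card_eq_fintype_card]
  by_cases hbt : (⊥ : L) = ⊤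
  · haveI hA : IsEmpty {a : L // IsAtom a} :=
      ⟨fun x => x.2.1 (le_bot_iff.mp (le_of_le_of_eq le_top hbt.symm))⟩
    haveI hC : IsEmpty {c : L // IsCoatom c} :=
      ⟨fun x => x.2.1 (top_le_iff.mp (le_of_eq_of_le hbt.symm bot_le) |>.symm ▸ rfl)⟩
    rw [Fintype.card_eq_zero, Fintype.card_eq_zero]
  · by_cases hr1 : r ⊤ = 1
    · have htopatom : IsAtom (⊤ : L) := gatom_of_rank hbot hcov' hr1
      have hbotco : IsCoatom (⊥ : L) := gcoatom_of_rank hcov' (by omega)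
      haveI : Unique {a : L // IsAtom a} :=
        { default := ⟨⊤, htopatom⟩
          uniq := fun x => Subtype.ext (by
            have h1 : r x.1 = 1 := grk_atom hbot hcov' x.2
            have h2 : x.1 = ⊤ := grk_eq_of_le hcov' le_top (by omega)
            exact h2) }
      haveI : Unique {c : L // IsCoatom c} :=
        { default := ⟨⊥, hbotco⟩
          uniq := fun x => Subtype.ext (by
            have h1 : r x.1 + 1 = r ⊤ := grk_coatom hcov' x.2
            have h2 : (⊥ : L) = x.1 := grk_eq_of_le hcov' bot_le (by omega)
            exact h2.symm) }
      rw [Fintype.card_unique, Fintype.card_unique]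
    · -- r ⊤ ≥ 2
      have hr0 : r ⊤ ≠ 0 := by
        intro h
        exact hbt (grk_eq_of_le hcov' bot_le (by omega))
      have hr2 : 2 ≤ r ⊤ := by omega
      have hbt' : ¬ (⊤ : L) ≤ ⊥ := fun h => hbt (le_antisymm bot_le h)
      obtain ⟨a, ha, -, -⟩ := gatom_sep hatomic' hbt'
      have hra : r a = 1 := grk_atom hbot hcov' ha
      have hane : a ≠ ⊤ := fun h => by rw [h] at hra; omega
      have hta : ¬ (⊤ : L) ≤ a := fun h => hane (le_antisymm le_top h)
      obtain ⟨b, hb, -, hba⟩ := gatom_sep hatomic' hta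
      have hab : b ≠ a := fun h => hba (h ▸ le_rfl)
      have hA2 : 2 ≤ Fintype.card {a : L // IsAtom a} := by
        have : (⟨b, hb⟩ : {a : L // IsAtom a}) ≠ ⟨a, ha⟩ :=
          fun h => hab (congrArg Subtype.val h)
        exact Fintype.one_lt_card_iff.mpr ⟨_, _, this⟩
      -- two distinct coatoms
      obtain ⟨y1, -, -, hy1a, hy1s⟩ := gexists_compl hbot hcov' hmod' hatomic'
        ha.bot_covBy (le_top : a ≤ ⊤) (le_refl ⊥) (bot_le : (⊥:L) ≤ ⊤)
        (bot_inf_eq a)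
      have hy1co : IsCoatom y1 := by
        apply gcoatom_of_rank hcov'
        have := hmod' y1 a
        rw [hy1a, hy1s, hbot, hra] at this
        omega
      have hay1 : ¬ a ≤ y1 := by
        intro h
        have : y1 ⊓ a = a := inf_eq_right.mpr h
        rw [hy1a] at this
        exact ha.1 this.symm
      obtain ⟨y2, hay2, -, hy2b, hy2s⟩ := gexists_compl hbot hcov' hmod' hatomic'
        hb.bot_covBy (le_top : b ≤ ⊤) (bot_le : (⊥:L) ≤ a) (le_top : a ≤ ⊤)
        (ginf_atom_bot hb hba)
      have hy2co : IsCoatom y2 := by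
        apply gcoatom_of_rank hcov'
        have := hmod' y2 b
        rw [hy2b, hy2s, hbot, grk_atom hbot hcov' hb] at this
        omega
      have hy12 : y1 ≠ y2 := fun h => hay1 (h ▸ hay2)
      have hC2 : 2 ≤ Fintype.card {c : L // IsCoatom c} := by
        have : (⟨y1, hy1co⟩ : {c : L // IsCoatom c}) ≠ ⟨y2, hy2co⟩ :=
          fun h => hy12 (congrArg Subtype.val h)
        exact Fintype.one_lt_card_iff.mpr ⟨_, _, this⟩
      exact le_antisymm (gA_le_C hbot hcov' hmod' hatomic' hA2)
        (gC_le_A hbot hcov' hmod' hatomic' hC2)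
end

section
/- Let L be a finite geometric lattice in which the number of atoms equals the number of coatoms. Then L is modular. -/
open Finset

namespace GreeneAux

open scoped Classical
set_option linter.unusedSectionVars false

variable {L : Type*} [Lattice L] [BoundedOrder L] [Fintype L]

noncomputable def Upf (x : L) : Finset L := Finset.univ.filter (fun y => x ⋖ y)
noncomputable def Cupf (x : L) : Finset L := Finset.univ.filter (fun c => IsCoatom c ∧ x ≤ c)

lemma mem_Upf {x y : L} : y ∈ Upf x ↔ x ⋖ y := by simp [Upf]
lemma mem_Cupf {x c : L} : c ∈ Cupf x ↔ IsCoatom c ∧ x ≤ c := by simp [Cupf]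

lemma finset_exists_minimal_old {α : Type*} [Preorder α] (s : Finset α) (h : s.Nonempty) :
    ∃ m ∈ s, ∀ x ∈ s, ¬ x < m := by
  obtain ⟨m, hm⟩ := s.exists_minimal h
  exact ⟨m, hm.1, fun x hx hlt => hlt.not_ge (hm.2 hx hlt.le)⟩

lemma finset_exists_maximal_old {α : Type*} [Preorder α] (s : Finset α) (h : s.Nonempty) :
    ∃ m ∈ s, ∀ x ∈ s, ¬ m < x := by
  obtain ⟨m, hm⟩ := s.exists_maximal h
  exact ⟨m, hm.1, fun x hx hlt => hlt.not_ge (hm.2 hx hlt.le)⟩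

lemma exists_covBy_of_lt {x y : L} (h : x < y) : ∃ z, x ⋖ z ∧ z ≤ y := by
  obtain ⟨z, hz, hm⟩ := finset_exists_minimal_old
    (Finset.univ.filter (fun z => x < z ∧ z ≤ y)) ⟨y, by simp [h]⟩
  simp only [Finset.mem_filter, Finset.mem_univ, true_and] at hz hm
  exact ⟨z, ⟨hz.1, fun w hw hwz => hm w ⟨hw, hwz.le.trans hz.2⟩ hwz⟩, hz.2⟩

lemma exists_coatom_ge {y : L} (h : y < ⊤) : ∃ c, IsCoatom c ∧ y ≤ c := by
  obtain ⟨c, hc, hm⟩ := finset_exists_maximal_old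
    (Finset.univ.filter (fun c => y ≤ c ∧ c < ⊤)) ⟨y, by simp [h]⟩
  simp only [Finset.mem_filter, Finset.mem_univ, true_and] at hc hm
  refine ⟨c, ⟨hc.2.ne, fun d hd => ?_⟩, hc.1⟩
  by_contra hdt
  exact hm d ⟨hc.1.trans hd.le, lt_top_iff_ne_top.2 hdt⟩ hd

variable (r : L → ℕ)

lemma r_lt_of_lt (hcov : ∀ x y : L, x ⋖ y → r y = r x + 1) :
    ∀ (k : ℕ) (x y : L), (Finset.univ.filter (fun z => x < z)).card ≤ k → x < y → r x < r y := by
  intro k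
  induction k with
  | zero =>
    intro x y hk h
    have hy : y ∈ Finset.univ.filter (fun z => x < z) := by simp [h]
    have := Finset.card_pos.2 ⟨y, hy⟩
    omega
  | succ k ih =>
    intro x y hk h
    obtain ⟨z, hxz, hzy⟩ := exists_covBy_of_lt h
    rcases eq_or_lt_of_le hzy with rfl | hlt
    · have := hcov x z hxz; omega
    · have hsub : (univ.filter (fun w => z < w)) ⊂ (univ.filter (fun w => x < w)) := by
        refine (Finset.ssubset_iff_of_subset ?_).2 ⟨z, by simp [hxz.lt], by simp⟩
        intro w hw; simp only [mem_filter, mem_univ, true_and] at hw ⊢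
        exact hxz.lt.trans hw
      have hc := Finset.card_lt_card hsub
      have h2 := ih z y (by omega) hlt
      have := hcov x z hxz
      omega

lemma r_strictMono (hcov : ∀ x y : L, x ⋖ y → r y = r x + 1) {x y : L} (h : x < y) :
    r x < r y :=
  r_lt_of_lt r hcov _ x y le_rfl h

lemma r_mono (hcov : ∀ x y : L, x ⋖ y → r y = r x + 1) {x y : L} (h : x ≤ y) : r x ≤ r y := by
  rcases eq_or_lt_of_le h with rfl | h
  · exact le_rfl
  · exact (r_strictMono r hcov h).le

lemma eq_of_le_of_r_le (hcov : ∀ x y : L, x ⋖ y → r y = r x + 1) {x y : L} (h : x ≤ y)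
    (hr : r y ≤ r x) : x = y := by
  rcases eq_or_lt_of_le h with rfl | h
  · rfl
  · exact absurd (r_strictMono r hcov h) (by omega)

lemma covBy_of_rank (hcov : ∀ x y : L, x ⋖ y → r y = r x + 1) {x y : L} (h : x < y)
    (hr : r y ≤ r x + 1) : x ⋖ y := by
  refine ⟨h, fun w hw hwy => ?_⟩
  have h1 := r_strictMono r hcov hw
  have h2 := r_strictMono r hcov hwy
  omega



structure Geom (r : L → ℕ) : Prop where
  bot : r ⊥ = 0
  cov : ∀ x y : L, x ⋖ y → r y = r x + 1
  atomic : ∀ x : L, ∃ S : Finset L, (∀ a ∈ S, IsAtom a) ∧ x = S.sup id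
  semimod : ∀ x y : L, r (x ⊓ y) + r (x ⊔ y) ≤ r x + r y

variable {r}


lemma r_atom (hg : Geom r) {a : L} (ha : IsAtom a) : r a = 1 := by
  have h1 : (⊥ : L) ⋖ a := ⟨ha.1.bot_lt, fun w hbw hwa => hbw.ne' (ha.2 w hwa)⟩
  have h2 := hg.cov ⊥ a h1
  have h3 := hg.bot
  omega

lemma r_coatom_top (hg : Geom r) {c : L} (hc : IsCoatom c) : r ⊤ = r c + 1 := by
  have h1 : c ⋖ (⊤ : L) := ⟨hc.1.lt_top, fun w hcw hwt => hwt.ne (hc.2 w hcw)⟩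
  exact hg.cov c ⊤ h1

lemma atom_join_covBy (hg : Geom r) {a x : L} (ha : IsAtom a) (hax : ¬ a ≤ x) : x ⋖ x ⊔ a := by
  have hxa : x ⊓ a = ⊥ := by
    rcases lt_or_eq_of_le (inf_le_right : x ⊓ a ≤ a) with h | h
    · exact ha.2 _ h
    · exact absurd (h ▸ inf_le_left) hax
  have hlt : x < x ⊔ a := lt_of_le_of_ne le_sup_left (fun h => hax (h ▸ le_sup_right))
  have hs := hg.semimod x a
  rw [hxa, hg.bot, r_atom hg ha] at hs
  exact covBy_of_rank r hg.cov hlt (by omega)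

/-- distinct covers of the same element are incomparable-or-equal -/
lemma cover_eq_of_le (hg : Geom r) {x q q' : L}
    (hq : x ⋖ q) (hq' : x ⋖ q') (h : q ≤ q') : q = q' := by
  have h1 := hg.cov x q hq
  have h2 := hg.cov x q' hq'
  exact eq_of_le_of_r_le r hg.cov h (by omega)

lemma join_cover_of_covers (hg : Geom r) {x p q : L} (hp : x ⋖ p) (hq : x ⋖ q) (hne : ¬ q ≤ p) :
    p ⋖ p ⊔ q := by
  have hinf : p ⊓ q = x := by
    rcases eq_or_lt_of_le (le_inf hp.le hq.le : x ≤ p ⊓ q) with h | h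
    · exact h.symm
    · rcases eq_or_lt_of_le (inf_le_right : p ⊓ q ≤ q) with h2 | h2
      · exact absurd (h2 ▸ inf_le_left) hne
      · exact absurd h2 (hq.2 h)
  have hlt : p < p ⊔ q := lt_of_le_of_ne le_sup_left (fun h => hne (le_sup_right.trans h.ge))
  have hs := hg.semimod p q
  rw [hinf] at hs
  have h1 := hg.cov x p hp
  have h2 := hg.cov x q hq
  exact covBy_of_rank r hg.cov hlt (by omega)

/-- relative atomicity: if every cover of `x` below `y` is below `c`, and `x ≤ c`, then `y ≤ c`. -/
lemma le_of_covers_le (hg : Geom r) {x y c : L} (hxy : x ≤ y) (hxc : x ≤ c)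
    (h : ∀ q, x ⋖ q → q ≤ y → q ≤ c) : y ≤ c := by
  obtain ⟨S, hS, rfl⟩ := hg.atomic y
  refine Finset.sup_le fun a ha => ?_
  have hay : id a ≤ S.sup id := Finset.le_sup ha
  by_cases hax : a ≤ x
  · exact hax.trans hxc
  · have hcov1 : x ⋖ x ⊔ a := atom_join_covBy hg (hS a ha) hax
    have : x ⊔ a ≤ c := h _ hcov1 (sup_le hxy hay)
    exact le_sup_right.trans this

lemma exists_cover_not_le (hg : Geom r) {x y c : L} (hxy : x ≤ y) (hxc : x ≤ c) (hyc : ¬ y ≤ c) :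
    ∃ q, x ⋖ q ∧ q ≤ y ∧ ¬ q ≤ c := by
  by_contra h
  push_neg at h
  exact hyc (le_of_covers_le hg hxy hxc
    (fun q hq hqy => h q hq hqy))

/-- Lemma E : there is a coatom above `x` avoiding a given cover `p` of `x`. -/
lemma exists_coatom_avoiding (hg : Geom r) {x p : L} (hxp : x ⋖ p) :
    ∃ c, IsCoatom c ∧ x ≤ c ∧ ¬ p ≤ c := by
  obtain ⟨c, hc, hm⟩ := finset_exists_maximal_old
    (Finset.univ.filter (fun c => x ≤ c ∧ ¬ p ≤ c)) ⟨x, by simp [hxp.lt.not_ge]⟩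
  simp only [Finset.mem_filter, Finset.mem_univ, true_and] at hc hm
  -- every atom not below c joins to the same cover of c, which must be ⊤
  have hat : ∃ a : L, IsAtom a ∧ ¬ a ≤ c := by
    by_contra h
    push_neg at h
    obtain ⟨S, hS, hT⟩ := hg.atomic (⊤ : L)
    have : (⊤ : L) ≤ c := hT ▸ Finset.sup_le (fun a ha => h a (hS a ha))
    exact hc.2 (le_top.trans this)
  obtain ⟨a0, ha0, ha0c⟩ := hat
  have key : ∀ a : L, IsAtom a → ¬ a ≤ c → c ⊔ a = c ⊔ a0 := by
    intro a ha hac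
    have h1 : c ⋖ c ⊔ a := atom_join_covBy hg ha hac
    have h0 : c ⋖ c ⊔ a0 := atom_join_covBy hg ha0 ha0c
    have hp1 : p ≤ c ⊔ a := by
      by_contra hpa
      exact hm _ ⟨hc.1.trans le_sup_left, hpa⟩ (lt_of_le_of_ne le_sup_left
        (fun h => hac (le_sup_right.trans h.ge)))
    have hp0 : p ≤ c ⊔ a0 := by
      by_contra hpa
      exact hm _ ⟨hc.1.trans le_sup_left, hpa⟩ (lt_of_le_of_ne le_sup_left
        (fun h => ha0c (le_sup_right.trans h.ge)))
    -- meet of the two covers contains p, hence is > c, hence each equals it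
    have hme : c < (c ⊔ a) ⊓ (c ⊔ a0) := by
      refine lt_of_le_of_ne (le_inf le_sup_left le_sup_left) (fun h => hc.2 ?_)
      exact (le_inf hp1 hp0).trans h.ge
    have h1' : (c ⊔ a) ⊓ (c ⊔ a0) = c ⊔ a := by
      rcases eq_or_lt_of_le (inf_le_left : (c ⊔ a) ⊓ (c ⊔ a0) ≤ c ⊔ a) with h | h
      · exact h
      · exact absurd h (h1.2 hme)
    have h0' : (c ⊔ a) ⊓ (c ⊔ a0) = c ⊔ a0 := by
      rcases eq_or_lt_of_le (inf_le_right : (c ⊔ a) ⊓ (c ⊔ a0) ≤ c ⊔ a0) with h | h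
      · exact h
      · exact absurd h (h0.2 hme)
    rw [← h1', h0']
  have htop : c ⊔ a0 = ⊤ := by
    refine top_unique ?_
    obtain ⟨S, hS, hT⟩ := hg.atomic (⊤ : L)
    rw [hT]
    refine Finset.sup_le fun a ha => ?_
    by_cases hac : a ≤ c
    · exact (hac.trans le_sup_left :)
    · exact (le_sup_right.trans (key a (hS a ha) hac).le :)
  have hco : IsCoatom c := by
    have h0 : c ⋖ c ⊔ a0 := atom_join_covBy hg ha0 ha0c
    rw [htop] at h0
    exact ⟨h0.lt.ne, fun d hd => by
      by_contra hdt
      exact h0.2 hd (lt_top_iff_ne_top.2 hdt)⟩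
  exact ⟨c, hco, hc.1, hc.2⟩

lemma not_le_of_cover_le {x p q c : L} (hg : Geom r) (hxp : x ⋖ p) (hq : x ⋖ q)
    (hqc : q ≤ c) (hpc : ¬ p ≤ c) : ¬ q ≤ p :=
  fun h => hpc ((cover_eq_of_le hg hq hxp h) ▸ hqc)

lemma image_mem_Upf (hg : Geom r) {x p c : L} (hxp : x ⋖ p) (hpc : ¬ p ≤ c) :
    ∀ q ∈ (Upf x).filter (fun q => q ≤ c), p ⊔ q ∈ Upf p := by
  intro q hq
  simp only [Finset.mem_filter, mem_Upf] at hq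
  exact mem_Upf.2 (join_cover_of_covers hg hxp hq.1
    (not_le_of_cover_le hg hxp hq.1 hq.2 hpc))

lemma injOn_join (hg : Geom r) {x p c : L} (hxp : x ⋖ p) (hpc : ¬ p ≤ c) :
    Set.InjOn (fun q => p ⊔ q) ((Upf x).filter (fun q => q ≤ c)) := by
  intro q hq q' hq' he
  simp only [Finset.coe_filter, Set.mem_setOf_eq, mem_Upf] at hq hq'
  by_contra hne
  have hne' : ¬ q' ≤ q := fun h => hne (cover_eq_of_le hg hq'.1 hq.1 h).symm
  have hlt : q < q ⊔ q' := lt_of_le_of_ne le_sup_left (fun h => hne' (le_sup_right.trans h.ge))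
  have hr1 : r x + 2 ≤ r (q ⊔ q') := by
    have := r_strictMono r hg.cov hlt
    have := hg.cov x q hq.1
    omega
  have hcovp : p ⋖ p ⊔ q := join_cover_of_covers hg hxp hq.1
    (not_le_of_cover_le hg hxp hq.1 hq.2 hpc)
  have hr2 : r (p ⊔ q) = r x + 2 := by
    have := hg.cov p (p ⊔ q) hcovp
    have := hg.cov x p hxp
    omega
  have hle : q ⊔ q' ≤ p ⊔ q := sup_le le_sup_right (by
    have : p ⊔ q' = p ⊔ q := by simpa using he.symm
    exact le_sup_right.trans this.le)
  have heq : q ⊔ q' = p ⊔ q := eq_of_le_of_r_le r hg.cov hle (by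
    have := r_mono r hg.cov hle; omega)
  have hp : p ≤ q ⊔ q' := by rw [heq]; exact le_sup_left
  exact hpc (hp.trans (sup_le hq.2 hq'.2))

lemma CM (hg : Geom r) {x : L}
    (fact2 : ∀ p, x ⋖ p → ∀ y z, p ≤ y → p ≤ z → r y + r z ≤ r (y ⊓ z) + r (y ⊔ z))
    (fact1 : ∀ p, x ⋖ p → ∀ c, IsCoatom c → x ≤ c → ¬ p ≤ c → ∀ l, p ⋖ l →
      ∃ q, x ⋖ q ∧ q ≤ l ∧ q ≤ c)
    {y c : L} (hxy : x ≤ y) (hc : IsCoatom c) (hxc : x ≤ c) (hyc : ¬ y ≤ c) :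
    r (y ⊓ c) + 1 = r y := by
  obtain ⟨q, hq, hqy, hqc⟩ := exists_cover_not_le hg hxy hxc hyc
  rcases eq_or_lt_of_le hqy with rfl | hqlt
  · have h1 : q ⊓ c = x := by
      refine le_antisymm ?_ (le_inf hxy hxc)
      rcases eq_or_lt_of_le (le_inf hxy hxc : x ≤ q ⊓ c) with h | h
      · exact h.ge
      · rcases eq_or_lt_of_le (inf_le_left : q ⊓ c ≤ q) with h2 | h2
        · exact absurd (h2.symm.le.trans inf_le_right) hyc
        · exact absurd h2 (hq.2 h)
    rw [h1]
    exact (hg.cov x q hq).symm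
  · obtain ⟨l, hql, hly⟩ := exists_covBy_of_lt hqlt
    obtain ⟨q', hq', hq'l, hq'c⟩ := fact1 q hq c hc hxc hqc l hql
    have h2 := fact2 q' hq' y c (hq'l.trans hly) hq'c
    have htop : y ⊔ c = ⊤ :=
      hc.2 _ (lt_of_le_of_ne le_sup_right (fun h => hyc (le_sup_left.trans h.ge)))
    have h3 := r_coatom_top hg hc
    rw [htop] at h2
    have h4 : r (y ⊓ c) < r y := r_strictMono r hg.cov
      (lt_of_le_of_ne inf_le_left (fun h => hyc (h.symm.le.trans inf_le_right)))
    omega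

lemma LSS (hg : Geom r) {x : L}
    (fact2 : ∀ p, x ⋖ p → ∀ y z, p ≤ y → p ≤ z → r y + r z ≤ r (y ⊓ z) + r (y ⊔ z))
    (fact1 : ∀ p, x ⋖ p → ∀ c, IsCoatom c → x ≤ c → ¬ p ≤ c → ∀ l, p ⋖ l →
      ∃ q, x ⋖ q ∧ q ≤ l ∧ q ≤ c)
    {a b y : L} (hxa : x ≤ a) (hxy : x ≤ y) (hab : a ⋖ b) :
    r (y ⊓ b) ≤ r (y ⊓ a) + 1 := by
  by_cases hva : y ⊓ b ≤ a
  · have h : y ⊓ b = y ⊓ a := le_antisymm (le_inf inf_le_left hva) (inf_le_inf_left y hab.le)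
    rw [h]
    omega
  · have hb : a ⊔ (y ⊓ b) = b := by
      rcases eq_or_lt_of_le (sup_le hab.le (inf_le_right : y ⊓ b ≤ b)) with h | h
      · exact h
      · exact absurd h (hab.2 (lt_of_le_of_ne le_sup_left
          (fun h2 => hva (le_sup_right.trans h2.ge))))
    have hav : a ⊓ (y ⊓ b) = y ⊓ a := by
      rw [← inf_assoc, inf_comm a y, inf_assoc, inf_eq_left.2 hab.le]
    rcases eq_or_lt_of_le (le_inf hxa (le_inf hxy (hxa.trans hab.le)) :
        x ≤ a ⊓ (y ⊓ b)) with h | h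
    · -- meet is x :  y ⊓ a = x ; suppose r (y ⊓ b) too big
      by_contra hcon
      push_neg at hcon
      have hgoal : r x + 2 ≤ r (y ⊓ b) := by
        have : r (y ⊓ a) = r x := by rw [← hav, ← h]
        omega
      obtain ⟨c', hc', hac', hbc'⟩ := exists_coatom_avoiding hg hab
      have hvc' : ¬ y ⊓ b ≤ c' := fun h2 => hbc' (hb ▸ sup_le hac' h2)
      have hcm := CM hg fact2 fact1 (le_inf hxy (hxa.trans hab.le)) hc'
        (hxa.trans hac') hvc'
      have hbc : b ⊓ c' = a := by
        refine le_antisymm ?_ (le_inf hab.le hac')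
        rcases eq_or_lt_of_le (le_inf hab.le hac' : a ≤ b ⊓ c') with h2 | h2
        · exact h2.ge
        · exact absurd (lt_of_le_of_ne inf_le_left
            (fun h3 => hbc' (h3.symm.le.trans inf_le_right))) (fun h4 => hab.2 h2 h4)
      have hta : y ⊓ b ⊓ c' ≤ x := by
        have h5 : y ⊓ b ⊓ c' ≤ a := by
          have : y ⊓ b ⊓ c' ≤ b ⊓ c' := inf_le_inf_right c' inf_le_right
          rw [hbc] at this
          exact this
        have h6 : y ⊓ b ⊓ c' ≤ a ⊓ (y ⊓ b) := le_inf h5 inf_le_left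
        rw [h]
        exact h6
      have h7 := r_mono r hg.cov hta
      omega
    · obtain ⟨q, hq, hqle⟩ := exists_covBy_of_lt h
      have h8 := fact2 q hq a (y ⊓ b) (hqle.trans inf_le_left) (hqle.trans inf_le_right)
      rw [hav, hb] at h8
      have := hg.cov a b hab
      omega

lemma CH (hg : Geom r) {x : L}
    (fact2 : ∀ p, x ⋖ p → ∀ y z, p ≤ y → p ≤ z → r y + r z ≤ r (y ⊓ z) + r (y ⊔ z))
    (fact1 : ∀ p, x ⋖ p → ∀ c, IsCoatom c → x ≤ c → ¬ p ≤ c → ∀ l, p ⋖ l →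
      ∃ q, x ⋖ q ∧ q ≤ l ∧ q ≤ c) :
    ∀ (k : ℕ) (z b y : L), x ≤ z → x ≤ y → z ≤ b → r b ≤ r z + k →
      r (y ⊓ b) + r z ≤ r (y ⊓ z) + r b := by
  intro k
  induction k with
  | zero =>
    intro z b y hxz hxy hzb hr
    have : z = b := eq_of_le_of_r_le r hg.cov hzb (by omega)
    subst this
    omega
  | succ k ih =>
    intro z b y hxz hxy hzb hr
    rcases eq_or_lt_of_le hzb with rfl | hlt
    · omega
    · obtain ⟨z', hzz', hz'b⟩ := exists_covBy_of_lt hlt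
      have hcz := hg.cov z z' hzz'
      have h1 := ih z' b y (hxz.trans hzz'.le) hxy hz'b (by omega)
      have h2 := LSS hg fact2 fact1 hxz hxy hzz'
      omega

noncomputable def dCf (x p : L) : ℕ := ((Cupf x).filter (fun c => p ≤ c)).card
noncomputable def dAf (x c : L) : ℕ := ((Upf x).filter (fun q => q ≤ c)).card
noncomputable def kf (x p : L) : ℕ := ((Cupf x).filter (fun c => ¬ p ≤ c)).card
noncomputable def jf (x c : L) : ℕ := ((Upf x).filter (fun q => ¬ q ≤ c)).card
noncomputable def Nf (x : L) : Finset (L × L) :=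
  ((Upf x) ×ˢ (Cupf x)).filter (fun z => ¬ z.1 ≤ z.2)

lemma dC_add_k (x p : L) : dCf x p + kf x p = (Cupf x).card :=
  Finset.card_filter_add_card_filter_not _

lemma dA_add_j (x c : L) : dAf x c + jf x c = (Upf x).card :=
  Finset.card_filter_add_card_filter_not _

lemma mem_Nf {x : L} {z : L × L} :
    z ∈ Nf x ↔ (x ⋖ z.1 ∧ (IsCoatom z.2 ∧ x ≤ z.2)) ∧ ¬ z.1 ≤ z.2 := by
  simp [Nf, Finset.mem_filter, Finset.mem_product, mem_Upf, mem_Cupf]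

lemma sumN1 (x : L) (F : L → ℚ) :
    ∑ z ∈ Nf x, F z.1 = ∑ p ∈ Upf x, (kf x p : ℚ) * F p := by
  rw [Nf, Finset.sum_filter, Finset.sum_product]
  refine Finset.sum_congr rfl fun p hp => ?_
  rw [← Finset.sum_filter (fun c => ¬ p ≤ c) (fun _ => F p), Finset.sum_const, nsmul_eq_mul]
  rfl

lemma sumN2 (x : L) (G : L → ℚ) :
    ∑ z ∈ Nf x, G z.2 = ∑ c ∈ Cupf x, (jf x c : ℚ) * G c := by
  rw [Nf, Finset.sum_filter, Finset.sum_product, Finset.sum_comm]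
  refine Finset.sum_congr rfl fun c hc => ?_
  rw [← Finset.sum_filter (fun p => ¬ p ≤ c) (fun _ => G c), Finset.sum_const, nsmul_eq_mul]
  rfl

theorem Pmain (hg : Geom r) : ∀ x : L, ((Upf x).card ≤ (Cupf x).card) ∧
    ((Upf x).card = (Cupf x).card → ∀ y z, x ≤ y → x ≤ z →
      r y + r z ≤ r (y ⊓ z) + r (y ⊔ z)) := by
  intro x0
  refine wellFounded_gt.induction (C := fun x : L => ((Upf x).card ≤ (Cupf x).card) ∧
    ((Upf x).card = (Cupf x).card → ∀ y z, x ≤ y → x ≤ z →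
      r y + r z ≤ r (y ⊓ z) + r (y ⊔ z))) x0 ?_
  clear x0
  intro x IH
  by_cases hxt : x = ⊤
  · subst hxt
    have hU : Upf (⊤ : L) = ∅ := by
      ext y
      simp only [mem_Upf, Finset.notMem_empty, iff_false]
      exact fun h => absurd h.lt not_top_lt
    refine ⟨by rw [hU]; simp, fun _ y z hy hz => ?_⟩
    rw [top_unique hy, top_unique hz]
    simp
  · have hxt' : x < ⊤ := lt_top_iff_ne_top.2 hxt
    obtain ⟨p0, hp0, _⟩ := exists_covBy_of_lt hxt'
    have hAne : (Upf x).Nonempty := ⟨p0, mem_Upf.2 hp0⟩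
    obtain ⟨c0', hc0', hxc0'⟩ := exists_coatom_ge hxt'
    have hCne : (Cupf x).Nonempty := ⟨c0', mem_Cupf.2 ⟨hc0', hxc0'⟩⟩
    have hn0 : 0 < (Upf x).card := Finset.card_pos.2 hAne
    have hm0 : 0 < (Cupf x).card := Finset.card_pos.2 hCne
    have hk1 : ∀ p, x ⋖ p → 1 ≤ kf x p := by
      intro p hp
      obtain ⟨c, hc, hxc, hpc⟩ := exists_coatom_avoiding hg hp
      exact Finset.card_pos.2 ⟨c, Finset.mem_filter.2 ⟨mem_Cupf.2 ⟨hc, hxc⟩, hpc⟩⟩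
    have hj1 : ∀ c, IsCoatom c → x ≤ c → 1 ≤ jf x c := by
      intro c hc hxc
      obtain ⟨q, hq, _, hqc⟩ := exists_cover_not_le hg le_top hxc
        (fun h => hc.1 (top_unique h))
      exact Finset.card_pos.2 ⟨q, Finset.mem_filter.2 ⟨mem_Upf.2 hq, hqc⟩⟩
    have hCup : ∀ p, x ⋖ p → (Cupf p).card = dCf x p := by
      intro p hp
      have h : Cupf p = (Cupf x).filter (fun c => p ≤ c) := by
        ext c
        simp only [mem_Cupf, Finset.mem_filter]
        constructor
        · rintro ⟨h1, h2⟩; exact ⟨⟨h1, hp.le.trans h2⟩, h2⟩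
        · rintro ⟨⟨h1, _⟩, h2⟩; exact ⟨h1, h2⟩
      rw [h]; rfl
    have hUP : ∀ p c, x ⋖ p → ¬ p ≤ c → dAf x c ≤ (Upf p).card := by
      intro p c hp hpc
      exact Finset.card_le_card_of_injOn (fun q => p ⊔ q)
        (image_mem_Upf hg hp hpc) (injOn_join hg hp hpc)
    have hchain : ∀ p c, x ⋖ p → ¬ p ≤ c → dAf x c ≤ dCf x p := by
      intro p c hp hpc
      have h1 := hUP p c hp hpc
      have h2 := (IH p hp.lt).1
      have h3 := hCup p hp
      omega
    have htriv : x ⋖ (⊤:L) → (Upf x).card = 1 ∧ (Cupf x).card = 1 := by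
      intro h
      have hA : Upf x = {⊤} := by
        ext q; simp only [mem_Upf, Finset.mem_singleton]
        constructor
        · intro hq
          by_contra hne
          exact h.2 hq.lt (lt_top_iff_ne_top.2 hne)
        · rintro rfl; exact h
      have hC : Cupf x = {x} := by
        ext c; simp only [mem_Cupf, Finset.mem_singleton]
        constructor
        · rintro ⟨hc, hxc⟩
          rcases eq_or_lt_of_le hxc with h2 | h2
          · exact h2.symm
          · exact absurd hc.1.lt_top (h.2 h2)
        · rintro rfl
          refine ⟨⟨h.lt.ne, fun d hd => ?_⟩, le_rfl⟩
          by_contra hdt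
          exact h.2 hd (lt_top_iff_ne_top.2 hdt)
      rw [hA, hC]; simp
    have hS1 : ∑ z ∈ Nf x, (1:ℚ) / (((Upf x).card * kf x z.1 : ℕ) : ℚ) = 1 := by
      rw [sumN1 x (fun p => (1:ℚ) / (((Upf x).card * kf x p : ℕ) : ℚ))]
      have hterm : ∀ p ∈ Upf x,
          (kf x p : ℚ) * ((1:ℚ) / (((Upf x).card * kf x p : ℕ) : ℚ)) = ((Upf x).card:ℚ)⁻¹ := by
        intro p hp
        have hk := hk1 p (mem_Upf.1 hp)
        have hk0 : ((kf x p : ℚ)) ≠ 0 := Nat.cast_ne_zero.2 (by omega)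
        have hn0' : (((Upf x).card : ℚ)) ≠ 0 := Nat.cast_ne_zero.2 (by omega)
        push_cast
        field_simp
      rw [Finset.sum_congr rfl hterm, Finset.sum_const, nsmul_eq_mul]
      field_simp
    have hS2 : ∑ z ∈ Nf x, (1:ℚ) / (((Cupf x).card * jf x z.2 : ℕ) : ℚ) = 1 := by
      rw [sumN2 x (fun c => (1:ℚ) / (((Cupf x).card * jf x c : ℕ) : ℚ))]
      have hterm : ∀ c ∈ Cupf x,
          (jf x c : ℚ) * ((1:ℚ) / (((Cupf x).card * jf x c : ℕ) : ℚ)) = ((Cupf x).card:ℚ)⁻¹ := by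
        intro c hc
        have hcc := mem_Cupf.1 hc
        have hj := hj1 c hcc.1 hcc.2
        have hj0 : ((jf x c : ℚ)) ≠ 0 := Nat.cast_ne_zero.2 (by omega)
        have hm0' : (((Cupf x).card : ℚ)) ≠ 0 := Nat.cast_ne_zero.2 (by omega)
        push_cast
        field_simp
      rw [Finset.sum_congr rfl hterm, Finset.sum_const, nsmul_eq_mul]
      field_simp
    constructor
    · -- the inequality  #Upf x ≤ #Cupf x
      by_contra hcon
      push_neg at hcon
      have hTA : ∀ p, x ⋖ p → p ≠ ⊤ := by
        intro p hp hpt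
        subst hpt
        obtain ⟨e1, e2⟩ := htriv hp
        omega
      have hd1 : ∀ p, x ⋖ p → 1 ≤ dCf x p := by
        intro p hp
        have hpt : p < ⊤ := lt_top_iff_ne_top.2 (hTA p hp)
        obtain ⟨c, hc, hpc⟩ := exists_coatom_ge hpt
        exact Finset.card_pos.2 ⟨c, Finset.mem_filter.2
          ⟨mem_Cupf.2 ⟨hc, hp.le.trans hpc⟩, hpc⟩⟩
      have hNne : (Nf x).Nonempty := by
        obtain ⟨c1, hc1, hxc1, hpc1⟩ := exists_coatom_avoiding hg hp0
        exact ⟨(p0, c1), mem_Nf.2 ⟨⟨hp0, hc1, hxc1⟩, hpc1⟩⟩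
      have hstr : ∀ z ∈ Nf x, (1:ℚ)/(((Cupf x).card * jf x z.2 : ℕ):ℚ) <
          (1:ℚ)/(((Upf x).card * kf x z.1 : ℕ):ℚ) := by
        intro z hz
        obtain ⟨⟨hzp, hzc, hzxc⟩, hzn⟩ := mem_Nf.1 hz
        have h1 := dC_add_k x z.1
        have h2 := dA_add_j x z.2
        have h3 := hchain z.1 z.2 hzp hzn
        have h4 := hd1 z.1 hzp
        have e1 : (Upf x).card * dCf x z.1 + (Upf x).card * kf x z.1
            = (Upf x).card * (Cupf x).card := by rw [← Nat.mul_add, h1]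
        have e2 : (Cupf x).card * dAf x z.2 + (Cupf x).card * jf x z.2
            = (Cupf x).card * (Upf x).card := by rw [← Nat.mul_add, h2]
        have e3 : (Cupf x).card * dAf x z.2 < (Upf x).card * dCf x z.1 :=
          lt_of_le_of_lt (Nat.mul_le_mul le_rfl h3)
            ((mul_lt_mul_iff_left₀ (by omega)).2 hcon)
        have e4 : (Upf x).card * (Cupf x).card = (Cupf x).card * (Upf x).card :=
          Nat.mul_comm _ _
        have e5 : (Upf x).card * kf x z.1 < (Cupf x).card * jf x z.2 := by
          linarith only [e1, e2, e3, e4]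
        have hpos : (0:ℚ) < (((Upf x).card * kf x z.1 : ℕ):ℚ) := by
          have := hk1 z.1 hzp
          exact_mod_cast Nat.mul_pos (by omega) (by omega)
        exact one_div_lt_one_div_of_lt hpos (by exact_mod_cast e5)
      have hlt := Finset.sum_lt_sum_of_nonempty hNne hstr
      rw [hS1, hS2] at hlt
      exact absurd hlt (lt_irrefl 1)
    · -- the equality case : modularity of [x, ⊤]
      intro hEq y z hyx hzx
      have hple : ∀ w ∈ Nf x, (1:ℚ)/(((Cupf x).card * jf x w.2 : ℕ):ℚ) ≤
          (1:ℚ)/(((Upf x).card * kf x w.1 : ℕ):ℚ) := by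
        intro w hw
        obtain ⟨⟨hzp, hzc, hzxc⟩, hzn⟩ := mem_Nf.1 hw
        have h1 := dC_add_k x w.1
        have h2 := dA_add_j x w.2
        have h3 := hchain w.1 w.2 hzp hzn
        have e1 : (Upf x).card * dCf x w.1 + (Upf x).card * kf x w.1
            = (Upf x).card * (Cupf x).card := by rw [← Nat.mul_add, h1]
        have e2 : (Cupf x).card * dAf x w.2 + (Cupf x).card * jf x w.2
            = (Cupf x).card * (Upf x).card := by rw [← Nat.mul_add, h2]
        have e3 : (Cupf x).card * dAf x w.2 ≤ (Upf x).card * dCf x w.1 := by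
          rw [← hEq]
          exact Nat.mul_le_mul le_rfl h3
        have e4 : (Upf x).card * (Cupf x).card = (Cupf x).card * (Upf x).card :=
          Nat.mul_comm _ _
        have e5 : (Upf x).card * kf x w.1 ≤ (Cupf x).card * jf x w.2 := by
          linarith only [e1, e2, e3, e4]
        have hpos : (0:ℚ) < (((Upf x).card * kf x w.1 : ℕ):ℚ) := by
          have := hk1 w.1 hzp
          exact_mod_cast Nat.mul_pos (by omega) (by omega)
        exact one_div_le_one_div_of_le hpos (by exact_mod_cast e5)
      have hzero : ∀ w ∈ Nf x,
          (1:ℚ)/(((Upf x).card * kf x w.1 : ℕ):ℚ)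
          - (1:ℚ)/(((Cupf x).card * jf x w.2 : ℕ):ℚ) = 0 := by
        have hsum0 : ∑ w ∈ Nf x, ((1:ℚ)/(((Upf x).card * kf x w.1 : ℕ):ℚ)
            - (1:ℚ)/(((Cupf x).card * jf x w.2 : ℕ):ℚ)) = 0 := by
          rw [Finset.sum_sub_distrib, hS1, hS2]
          ring
        exact fun w hw => (Finset.sum_eq_zero_iff_of_nonneg
          (fun w hw => sub_nonneg.2 (hple w hw))).1 hsum0 w hw
      have keyNum : ∀ p c, x ⋖ p → IsCoatom c → x ≤ c → ¬ p ≤ c →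
          dAf x c = dCf x p := by
        intro p c hp hc hxc hpc
        have hw : (p, c) ∈ Nf x := mem_Nf.2 ⟨⟨hp, hc, hxc⟩, hpc⟩
        have h0 := hzero (p, c) hw
        have h1 := dC_add_k x p
        have h2 := dA_add_j x c
        have hkp := hk1 p hp
        have hjc := hj1 c hc hxc
        have hne1 : (((Upf x).card * kf x p : ℕ):ℚ) ≠ 0 :=
          Nat.cast_ne_zero.2 (Nat.mul_ne_zero (by omega) (by omega))
        have hne2 : (((Cupf x).card * jf x c : ℕ):ℚ) ≠ 0 :=
          Nat.cast_ne_zero.2 (Nat.mul_ne_zero (by omega) (by omega))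
        have heqq : (((Upf x).card * kf x p : ℕ):ℚ) = (((Cupf x).card * jf x c : ℕ):ℚ) := by
          have h3 : (1:ℚ)/(((Upf x).card * kf x p : ℕ):ℚ)
              = (1:ℚ)/(((Cupf x).card * jf x c : ℕ):ℚ) := by
            simp only [Prod.fst, Prod.snd] at h0
            linarith only [h0]
          field_simp at h3
          push_cast at h3 ⊢
          linarith only [h3]
        have heqn : (Upf x).card * kf x p = (Cupf x).card * jf x c := by
          exact_mod_cast heqq
        rw [hEq] at heqn
        have hkj : kf x p = jf x c :=
          Nat.eq_of_mul_eq_mul_left (by omega) heqn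
        omega
      have keyCard : ∀ p, x ⋖ p → (Upf p).card = (Cupf p).card := by
        intro p hp
        obtain ⟨c, hc, hxc, hpc⟩ := exists_coatom_avoiding hg hp
        have h1 := keyNum p c hp hc hxc hpc
        have h2 := hUP p c hp hpc
        have h3 := (IH p hp.lt).1
        have h4 := hCup p hp
        omega
      have fact2 : ∀ p, x ⋖ p → ∀ y z, p ≤ y → p ≤ z →
          r y + r z ≤ r (y ⊓ z) + r (y ⊔ z) :=
        fun p hp => (IH p hp.lt).2 (keyCard p hp)
      have fact1 : ∀ p, x ⋖ p → ∀ c, IsCoatom c → x ≤ c → ¬ p ≤ c → ∀ l, p ⋖ l →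
          ∃ q, x ⋖ q ∧ q ≤ l ∧ q ≤ c := by
        intro p hp c hc hxc hpc l hl
        have h1 := keyNum p c hp hc hxc hpc
        have h2 := hUP p c hp hpc
        have h3 := (IH p hp.lt).1
        have h4 := hCup p hp
        have h5 : dAf x c = (Upf p).card := by omega
        have hcardim : (((Upf x).filter (fun q => q ≤ c)).image (fun q => p ⊔ q)).card
            = dAf x c := by
          rw [Finset.card_image_of_injOn (injOn_join hg hp hpc)]
          rfl
        have hsub : ((Upf x).filter (fun q => q ≤ c)).image (fun q => p ⊔ q) ⊆ Upf p :=
          Finset.image_subset_iff.2 (image_mem_Upf hg hp hpc)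
        have himeq : ((Upf x).filter (fun q => q ≤ c)).image (fun q => p ⊔ q) = Upf p :=
          Finset.eq_of_subset_of_card_le hsub (by omega)
        have hlmem : l ∈ ((Upf x).filter (fun q => q ≤ c)).image (fun q => p ⊔ q) := by
          rw [himeq]
          exact mem_Upf.2 hl
        obtain ⟨q, hqmem, hpq⟩ := Finset.mem_image.1 hlmem
        obtain ⟨hqA, hqc⟩ := Finset.mem_filter.1 hqmem
        exact ⟨q, mem_Upf.1 hqA, le_sup_right.trans hpq.le, hqc⟩
      have hfin := CH hg fact2 fact1 (r (y ⊔ z)) z (y ⊔ z) y hzx hyx le_sup_right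
        (by omega)
      rw [inf_sup_self] at hfin
      exact hfin

end GreeneAux

open scoped Classical in
/-- Greene, converse direction: a finite geometric lattice (graded,
atomic, upper semimodular) with as many atoms as coatoms is modular. -/
theorem modular_of_card_atoms_eq_card_coatoms {L : Type*} [Lattice L] [BoundedOrder L]
    [Fintype L] (r : L → ℕ)
    (hbot : r ⊥ = 0)
    (hcov : ∀ x y : L, x ⋖ y → r y = r x + 1)
    (hatomic : ∀ x : L, ∃ S : Finset L, (∀ a ∈ S, IsAtom a) ∧ x = S.sup id)
    (hsemimod : ∀ x y : L, r (x ⊓ y) + r (x ⊔ y) ≤ r x + r y)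
    (hcard : Nat.card {a : L // IsAtom a} = Nat.card {a : L // IsCoatom a}) :
    ∀ x y : L, r x + r y = r (x ⊓ y) + r (x ⊔ y) := by
  intro x y
  have hg : GreeneAux.Geom r := ⟨hbot, hcov, hatomic, hsemimod⟩
  have e1 : (GreeneAux.Upf (⊥:L)).card = Nat.card {a : L // IsAtom a} := by
    have h : GreeneAux.Upf (⊥:L) = Finset.univ.filter (fun a : L => IsAtom a) := by
      ext a
      simp [GreeneAux.mem_Upf, bot_covBy_iff]
    rw [h, Nat.card_eq_fintype_card, Fintype.card_subtype]
  have e2 : (GreeneAux.Cupf (⊥:L)).card = Nat.card {a : L // IsCoatom a} := by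
    have h : GreeneAux.Cupf (⊥:L) = Finset.univ.filter (fun a : L => IsCoatom a) := by
      ext a
      simp [GreeneAux.mem_Cupf]
    rw [h, Nat.card_eq_fintype_card, Fintype.card_subtype]
  have hmain := (GreeneAux.Pmain hg ⊥).2 (by rw [e1, e2, hcard]) x y bot_le bot_le
  have h4 := hsemimod x y
  omega
end

section
/- Let M = (E, F) be a matroid with basis set B, and let Φ_M = Σ_{B∈B} Π_{b∈B} x_b ∈ k[x_e : e ∈ E], where char k = 0. Then the annihilator ideal Ann Φ_M in Q = k[∂/∂x_e : e ∈ E] contains: (a) x_e² for every e ∈ E, (b) the monomial x_S = Π_{e∈S} x_e for every dependent set S, and (c) the binomial x_A − x_{A'} for all independent sets A, A' with σ(A) = σ(A'). -/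
open MvPolynomial

/-- The differential operator `∂^m = ∏ e (∂/∂x_e)^{m e}` applied to `F`. -/
noncomputable def diffMon {k : Type*} [CommSemiring k] {E : Type*} [Fintype E]
    (m : E →₀ ℕ) (F : MvPolynomial E k) : MvPolynomial E k :=
  Finset.univ.toList.foldl (fun G e => (fun H => pderiv e H)^[m e] G) F

/-- The action of `φ ∈ Q = k[∂/∂x_e : e ∈ E]` on a polynomial `F ∈ k[x_e : e ∈ E]`. -/
noncomputable def diffAct {k : Type*} [CommSemiring k] {E : Type*} [Fintype E]
    (φ F : MvPolynomial E k) : MvPolynomial E k :=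
  ∑ m ∈ φ.support, φ.coeff m • diffMon m F

/-- The basis generating polynomial `Φ_M = Σ_{B a basis} Π_{b ∈ B} x_b` of a matroid. -/
noncomputable def basisGenPoly {k : Type*} [CommSemiring k] {E : Type*} [Fintype E]
    (M : Matroid E) : MvPolynomial E k :=
  ∑ B : Finset E,
    haveI := Classical.propDecidable (M.IsBase (B : Set E))
    if M.IsBase (B : Set E) then ∏ e ∈ B, X e else 0

set_option linter.unusedSectionVars false

section Aux

variable {k : Type*} [CommSemiring k] {E : Type*} [Fintype E] [DecidableEq E]

lemma aux_pderiv_prod_X (e : E) (B : Finset E) :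
    pderiv e (∏ b ∈ B, X b : MvPolynomial E k) =
      if e ∈ B then ∏ b ∈ B.erase e, X b else 0 := by
  induction B using Finset.induction_on with
  | empty => simp [pderiv_one]
  | insert a B ha ih =>
    rw [Finset.prod_insert ha, pderiv_mul, ih]
    by_cases hea : e = a
    · subst hea
      simp [ha, Finset.erase_insert ha]
    · rw [pderiv_X_of_ne (Ne.symm hea)]
      by_cases heB : e ∈ B
      · simp only [heB, if_pos, Finset.mem_insert, hea, false_or, zero_mul, zero_add]
        rw [Finset.erase_insert_of_ne (Ne.symm hea),
          Finset.prod_insert (fun h => ha (Finset.mem_of_mem_erase h))]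
      · simp [heB, hea]

lemma aux_pderiv_iterate_zero (e : E) (n : ℕ) :
    (fun H : MvPolynomial E k => pderiv e H)^[n] 0 = 0 :=
  Function.iterate_fixed (map_zero _) n

lemma aux_pderiv_iterate_add (e : E) (n : ℕ) (F G : MvPolynomial E k) :
    (fun H => pderiv e H)^[n] (F + G) =
      (fun H => pderiv e H)^[n] F + (fun H => pderiv e H)^[n] G := by
  induction n generalizing F G with
  | zero => simp
  | succ n ih => simp only [Function.iterate_succ_apply, map_add, ih]

lemma aux_foldl_zero (m : E →₀ ℕ) (l : List E) :
    l.foldl (fun G e => (fun H : MvPolynomial E k => pderiv e H)^[m e] G) 0 = 0 := by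
  induction l with
  | nil => rfl
  | cons e t ih => simpa [aux_pderiv_iterate_zero] using ih

lemma aux_foldl_add (m : E →₀ ℕ) (l : List E) (F G : MvPolynomial E k) :
    l.foldl (fun G e => (fun H => pderiv e H)^[m e] G) (F + G) =
      l.foldl (fun G e => (fun H => pderiv e H)^[m e] G) F +
        l.foldl (fun G e => (fun H => pderiv e H)^[m e] G) G := by
  induction l generalizing F G with
  | nil => rfl
  | cons e t ih => simp only [List.foldl_cons, aux_pderiv_iterate_add, ih]

lemma aux_foldl_sum {ι : Type*} (m : E →₀ ℕ) (l : List E) (s : Finset ι)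
    (f : ι → MvPolynomial E k) :
    l.foldl (fun G e => (fun H => pderiv e H)^[m e] G) (∑ i ∈ s, f i) =
      ∑ i ∈ s, l.foldl (fun G e => (fun H => pderiv e H)^[m e] G) (f i) := by
  induction s using Finset.cons_induction with
  | empty => simpa using aux_foldl_zero m l
  | cons a s ha ih =>
    rw [Finset.sum_cons, Finset.sum_cons, aux_foldl_add, ih]

lemma aux_foldl_prod_X (m : E →₀ ℕ) (l : List E) (hl : l.Nodup) (B : Finset E) :
    l.foldl (fun G e => (fun H : MvPolynomial E k => pderiv e H)^[m e] G) (∏ b ∈ B, X b)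
      = if (∀ e ∈ l, m e ≠ 0 → (e ∈ B ∧ m e = 1)) then
          ∏ b ∈ B \ l.toFinset.filter (fun e => m e ≠ 0), X b else 0 := by
  induction l generalizing B with
  | nil => simp
  | cons e t ih =>
    obtain ⟨het, ht⟩ := List.nodup_cons.mp hl
    simp only [List.foldl_cons]
    match hme : m e with
    | 0 =>
      rw [Function.iterate_zero, id_eq, ih ht]
      have hS : (e :: t).toFinset.filter (fun x => m x ≠ 0)
          = t.toFinset.filter (fun x => m x ≠ 0) := by
        simp [List.toFinset_cons, Finset.filter_insert, hme]
      rw [hS]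
      apply if_congr _ rfl rfl
      constructor
      · intro h x hx
        rcases List.mem_cons.mp hx with rfl | hx
        · intro h0; exact absurd hme h0
        · exact h x hx
      · intro h x hx; exact h x (List.mem_cons_of_mem e hx)
    | 1 =>
      rw [Function.iterate_one]
      rw [aux_pderiv_prod_X]
      by_cases heB : e ∈ B
      · rw [if_pos heB, ih ht]
        have hS : B.erase e \ t.toFinset.filter (fun x => m x ≠ 0)
            = B \ (e :: t).toFinset.filter (fun x => m x ≠ 0) := by
          ext x
          simp only [Finset.mem_sdiff, Finset.mem_erase, Finset.mem_filter,
            List.toFinset_cons, Finset.mem_insert, List.mem_toFinset]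
          constructor
          · rintro ⟨⟨hxe, hxB⟩, hx⟩
            exact ⟨hxB, fun ⟨h1, h2⟩ => by
              rcases h1 with rfl | h1
              · exact hxe rfl
              · exact hx ⟨h1, h2⟩⟩
          · rintro ⟨hxB, hx⟩
            by_cases hxe : x = e
            · subst hxe; exact absurd ⟨Or.inl rfl, by simp [hme]⟩ hx
            · exact ⟨⟨hxe, hxB⟩, fun ⟨h1, h2⟩ => hx ⟨Or.inr h1, h2⟩⟩
        rw [hS]
        apply if_congr _ rfl rfl
        constructor
        · intro h x hx
          rcases List.mem_cons.mp hx with rfl | hx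
          · exact fun _ => ⟨heB, hme⟩
          · intro h0
            obtain ⟨h1, h2⟩ := h x hx h0
            exact ⟨Finset.mem_of_mem_erase h1, h2⟩
        · intro h x hx h0
          obtain ⟨h1, h2⟩ := h x (List.mem_cons_of_mem e hx) h0
          refine ⟨Finset.mem_erase.mpr ⟨?_, h1⟩, h2⟩
          rintro rfl; exact het hx
      · rw [if_neg heB, aux_foldl_zero]
        rw [if_neg]
        intro h
        exact heB (h e (List.mem_cons_self) (by simp [hme])).1
    | (n+2) =>
      have h2 : (fun H : MvPolynomial E k => pderiv e H)^[n+2] (∏ b ∈ B, X b) = 0 := by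
        rw [Function.iterate_add_apply]
        have hf2 : (fun H : MvPolynomial E k => pderiv e H)^[2] (∏ b ∈ B, X b) = 0 := by
          have : (fun H : MvPolynomial E k => pderiv e H)^[2] (∏ b ∈ B, X b)
              = pderiv e (pderiv e (∏ b ∈ B, X b)) := rfl
          rw [this, aux_pderiv_prod_X]
          split_ifs with h
          · rw [aux_pderiv_prod_X, if_neg (Finset.notMem_erase e B)]
          · exact map_zero _
        rw [hf2, aux_pderiv_iterate_zero]
      rw [h2, aux_foldl_zero, if_neg]
      intro h
      have := (h e (List.mem_cons_self) (by omega)).2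
      omega

open Classical in
lemma aux_diffMon_basisGenPoly (M : Matroid E) (m : E →₀ ℕ) :
    diffMon m (basisGenPoly (k := k) M) =
      ∑ B : Finset E,
        (if M.IsBase (B : Set E) then
          (if (∀ e, m e ≠ 0 → (e ∈ B ∧ m e = 1)) then
            ∏ b ∈ B \ Finset.univ.filter (fun e => m e ≠ 0), X b else 0) else 0) := by
  unfold diffMon basisGenPoly
  rw [aux_foldl_sum]
  apply Finset.sum_congr rfl
  intro B _
  by_cases hB : M.IsBase (B : Set E)
  · rw [if_pos hB, if_pos hB, aux_foldl_prod_X m _ (Finset.nodup_toList _)]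
    have hcond : (∀ e ∈ Finset.univ.toList, m e ≠ 0 → (e ∈ B ∧ m e = 1))
        ↔ (∀ e, m e ≠ 0 → (e ∈ B ∧ m e = 1)) := by
      constructor
      · intro h e; exact h e (Finset.mem_toList.mpr (Finset.mem_univ e))
      · intro h e _; exact h e
    have hS : Finset.univ.toList.toFinset.filter (fun e => m e ≠ 0)
        = Finset.univ.filter (fun e => m e ≠ 0) := by
      congr 1
      exact Finset.toList_toFinset _
    rw [hS]
    exact if_congr hcond rfl rfl
  · rw [if_neg hB, if_neg hB]
    exact aux_foldl_zero m _

lemma aux_prod_X_eq_monomial (A : Finset E) :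
    (∏ e ∈ A, X e : MvPolynomial E k) = monomial (∑ e ∈ A, Finsupp.single e 1) 1 := by
  induction A using Finset.induction_on with
  | empty => simp
  | insert a A ha ih =>
    rw [Finset.prod_insert ha, Finset.sum_insert ha, ih, X, monomial_mul, one_mul]

lemma aux_indicator_apply (A : Finset E) (x : E) :
    (∑ e ∈ A, Finsupp.single e 1 : E →₀ ℕ) x = if x ∈ A then 1 else 0 := by
  rw [Finsupp.finset_sum_apply]
  simp [Finsupp.single_apply]

lemma aux_diffAct_monomial [Nontrivial k] (m : E →₀ ℕ) (F : MvPolynomial E k) :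
    diffAct (monomial m (1 : k)) F = diffMon m F := by
  classical
  unfold diffAct
  rw [support_monomial, if_neg one_ne_zero, Finset.sum_singleton, coeff_monomial, if_pos rfl,
    one_smul]

open Classical in
lemma aux_diffAct_prod [Nontrivial k] (M : Matroid E) (A : Finset E) :
    diffAct (∏ e ∈ A, X e) (basisGenPoly (k := k) M) =
      ∑ B : Finset E, if M.IsBase (B : Set E) ∧ A ⊆ B then ∏ b ∈ B \ A, X b else 0 := by
  rw [aux_prod_X_eq_monomial, aux_diffAct_monomial, aux_diffMon_basisGenPoly]
  apply Finset.sum_congr rfl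
  intro B _
  have hA : Finset.univ.filter (fun e => (∑ e ∈ A, Finsupp.single e 1 : E →₀ ℕ) e ≠ 0) = A := by
    ext x
    simp only [Finset.mem_filter, Finset.mem_univ, true_and, aux_indicator_apply]
    by_cases hx : x ∈ A <;> simp [hx]
  have hcond : (∀ e, (∑ e ∈ A, Finsupp.single e 1 : E →₀ ℕ) e ≠ 0 →
      (e ∈ B ∧ (∑ e ∈ A, Finsupp.single e 1 : E →₀ ℕ) e = 1)) ↔ A ⊆ B := by
    constructor
    · intro h x hx
      exact (h x (by simp [aux_indicator_apply, hx])).1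
    · intro h x
      rw [aux_indicator_apply]
      by_cases hx : x ∈ A
      · simp only [hx, if_pos]
        intro _
        exact ⟨h hx, trivial⟩
      · simp [hx]
  rw [hA]
  by_cases h1 : M.IsBase (B : Set E)
  · rw [if_pos h1]
    by_cases h2 : A ⊆ B
    · rw [if_pos (hcond.mpr h2), if_pos ⟨h1, h2⟩]
    · rw [if_neg (fun hc => h2 (hcond.mp hc)), if_neg (fun hc => h2 hc.2)]
  · rw [if_neg h1, if_neg (fun hc => h1 hc.1)]

lemma aux_diffAct_sub {k : Type*} [CommRing k] {E' : Type*} [Fintype E']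
    (φ ψ F : MvPolynomial E' k) :
    diffAct (φ - ψ) F = diffAct φ F - diffAct ψ F := by
  rw [diffAct, diffAct, diffAct, ← sum_def (b := fun m c => c • diffMon m F),
    ← sum_def (b := fun m c => c • diffMon m F), ← sum_def (b := fun m c => c • diffMon m F)]
  exact Finsupp.sum_sub_index (fun a b₁ b₂ => sub_smul b₁ b₂ _)

/-- The key matroid exchange fact. -/
lemma aux_matroid_key (M : Matroid E) (hE : M.E = Set.univ) {A A' U : Finset E}
    (hA : M.Indep (A : Set E)) (hA' : M.Indep (A' : Set E))
    (hσ : M.closure (A : Set E) = M.closure (A' : Set E))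
    (hU : Disjoint U A) (hB : M.IsBase ((U : Set E) ∪ (A : Set E))) :
    Disjoint U A' ∧ M.IsBase ((U : Set E) ∪ (A' : Set E)) := by
  have hground : ∀ s : Set E, s ⊆ M.E := by rw [hE]; exact fun s => Set.subset_univ s
  have hUc : Disjoint (U : Set E) (M.closure (A : Set E)) := by
    rw [Set.disjoint_left]
    intro u hu hucl
    have huA : u ∉ (A : Set E) := by
      intro huA
      exact (Finset.disjoint_left.mp hU (by exact_mod_cast hu)) (by exact_mod_cast huA)
    have hins : M.Indep (insert u (A : Set E)) := by
      apply hB.indep.subset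
      intro x hx
      rcases Set.mem_insert_iff.mp hx with rfl | hx
      · exact Or.inl hu
      · exact Or.inr hx
    rw [hA.insert_indep_iff_of_notMem huA] at hins
    exact hins.2 hucl
  have hUA' : Disjoint (U : Set E) (A' : Set E) := by
    refine Set.disjoint_of_subset_right ?_ (hσ ▸ hUc)
    exact M.subset_closure _ (hground _)
  have hUA'f : Disjoint U A' := by
    rwa [← Finset.disjoint_coe]
  have hsp : M.Spanning ((U : Set E) ∪ (A' : Set E)) := by
    rw [M.spanning_iff_closure_eq (hground _)]
    calc M.closure ((U : Set E) ∪ (A' : Set E))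
        = M.closure ((U : Set E) ∪ M.closure (A' : Set E)) :=
          (M.closure_union_closure_right_eq _ _).symm
      _ = M.closure ((U : Set E) ∪ M.closure (A : Set E)) := by rw [hσ]
      _ = M.closure ((U : Set E) ∪ (A : Set E)) := M.closure_union_closure_right_eq _ _
      _ = M.E := hB.closure_eq
  have hcard : ((U : Set E) ∪ (A' : Set E)).encard = ((U : Set E) ∪ (A : Set E)).encard := by
    rw [Set.encard_union_eq hUA', Set.encard_union_eq (by rwa [Finset.disjoint_coe])]
    congr 1
    have b1 := hA.isBasis_closure
    have b2 := hA'.isBasis_closure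
    rw [hσ] at b1
    exact b2.encard_eq_encard b1
  obtain ⟨B', hB', hB'sub⟩ := hsp.exists_isBase_subset
  have hfin : ((U : Set E) ∪ (A' : Set E)).Finite := Set.toFinite _
  have hle : ((U : Set E) ∪ (A' : Set E)).encard ≤ B'.encard := by
    rw [hcard, ← hB'.encard_eq_encard_of_isBase hB]
  have hBeq : B' = (U : Set E) ∪ (A' : Set E) :=
    hfin.eq_of_subset_of_encard_le' hB'sub hle
  exact ⟨hUA'f, hBeq ▸ hB'⟩

/-- Combined step used in the bijection for part (c). -/
lemma aux_step (M : Matroid E) (hE : M.E = Set.univ) {A A' : Finset E}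
    (hA : M.Indep (A : Set E)) (hA' : M.Indep (A' : Set E))
    (hσ : M.closure (A : Set E) = M.closure (A' : Set E))
    {B : Finset E} (hBb : M.IsBase (B : Set E)) (hAB : A ⊆ B) :
    (M.IsBase (((B \ A) ∪ A' : Finset E) : Set E) ∧ A' ⊆ (B \ A) ∪ A') ∧
      ((B \ A) ∪ A') \ A' = B \ A := by
  have hUd : Disjoint (B \ A) A := Finset.sdiff_disjoint
  have hUb : M.IsBase (((B \ A : Finset E) : Set E) ∪ (A : Set E)) := by
    rwa [← Finset.coe_union, Finset.sdiff_union_of_subset hAB]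
  obtain ⟨hd', hb'⟩ := aux_matroid_key M hE hA hA' hσ hUd hUb
  refine ⟨⟨by rw [Finset.coe_union]; exact hb', Finset.subset_union_right⟩, ?_⟩
  ext x
  have h1 := Finset.disjoint_left.mp hd'
  simp only [Finset.mem_sdiff, Finset.mem_union]
  constructor
  · rintro ⟨h2 | h2, h3⟩
    · exact h2
    · exact absurd h2 h3
  · intro h2
    exact ⟨Or.inl h2, h1 (Finset.mem_sdiff.mpr h2)⟩

end Aux

/-- `Ann Φ_M` contains (a) `x_e²` for every `e`, (b) `x_S` for every
dependent set `S`, and (c) `x_A − x_{A'}` for all independent `A, A'` with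
`σ(A) = σ(A')`. -/
theorem ann_basisGenPoly_contains {k : Type*} [Field k] [CharZero k] {E : Type*}
    [Fintype E] (M : Matroid E) (hE : M.E = Set.univ) :
    (∀ e : E, diffAct (X e ^ 2) (basisGenPoly (k := k) M) = 0) ∧
      (∀ S : Finset E, ¬ M.Indep (S : Set E) →
        diffAct (∏ e ∈ S, X e) (basisGenPoly (k := k) M) = 0) ∧
      (∀ A A' : Finset E, M.Indep (A : Set E) → M.Indep (A' : Set E) →
        M.closure (A : Set E) = M.closure (A' : Set E) →
        diffAct ((∏ e ∈ A, X e) - ∏ e ∈ A', X e) (basisGenPoly (k := k) M) = 0) := by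
  classical
  refine ⟨?_, ?_, ?_⟩
  · -- (a)
    intro e
    rw [X_pow_eq_monomial, aux_diffAct_monomial, aux_diffMon_basisGenPoly]
    apply Finset.sum_eq_zero
    intro B _
    have hcf : ¬ (∀ x, (Finsupp.single e 2 : E →₀ ℕ) x ≠ 0 →
        (x ∈ B ∧ (Finsupp.single e 2 : E →₀ ℕ) x = 1)) := by
      intro h
      have := (h e (by simp)).2
      simp at this
    rw [if_neg hcf]
    split_ifs <;> rfl
  · -- (b)
    intro S hS
    rw [aux_diffAct_prod]
    apply Finset.sum_eq_zero
    intro B _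
    rw [if_neg]
    rintro ⟨hBb, hSB⟩
    exact hS (hBb.indep.subset (by exact_mod_cast Finset.coe_subset.mpr hSB))
  · -- (c)
    intro A A' hA hA' hσ
    rw [aux_diffAct_sub, sub_eq_zero, aux_diffAct_prod, aux_diffAct_prod,
      ← Finset.sum_filter, ← Finset.sum_filter]
    refine Finset.sum_bij'
      (fun B _ => (B \ A) ∪ A') (fun B _ => (B \ A') ∪ A) ?_ ?_ ?_ ?_ ?_
    · intro B hB
      rw [Finset.mem_filter] at hB ⊢
      obtain ⟨h1, _⟩ := aux_step M hE hA hA' hσ hB.2.1 hB.2.2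
      exact ⟨Finset.mem_univ _, h1⟩
    · intro B hB
      rw [Finset.mem_filter] at hB ⊢
      obtain ⟨h1, _⟩ := aux_step M hE hA' hA hσ.symm hB.2.1 hB.2.2
      exact ⟨Finset.mem_univ _, h1⟩
    · intro B hB
      rw [Finset.mem_filter] at hB
      obtain ⟨_, h2⟩ := aux_step M hE hA hA' hσ hB.2.1 hB.2.2
      show ((B \ A ∪ A') \ A') ∪ A = B
      rw [h2, Finset.sdiff_union_of_subset hB.2.2]
    · intro B hB
      rw [Finset.mem_filter] at hB
      obtain ⟨_, h2⟩ := aux_step M hE hA' hA hσ.symm hB.2.1 hB.2.2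
      show ((B \ A' ∪ A) \ A) ∪ A' = B
      rw [h2, Finset.sdiff_union_of_subset hB.2.2]
    · intro B hB
      rw [Finset.mem_filter] at hB
      obtain ⟨_, h2⟩ := aux_step M hE hA hA' hσ hB.2.1 hB.2.2
      rw [h2]
end

section
/- Let M be a matroid, Ω the set of flats, and for each flat τ of M let f_τ = Σ x_F, the sum of square-free monomials x_F over all independent sets F with σ(F) = τ. Then the ideal J_M generated by Λ_M = {x_e²} ∪ {x_S : S dependent} ∪ {x_A − x_{A'} : A, A' independent, σ(A) = σ(A')} in the differential-operator ring Q equals the intersection ∩_{τ∈Ω} Ann f_τ. -/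
open MvPolynomial

set_option linter.unusedSectionVars false

section Infra
variable {k : Type*} [CommSemiring k] {E : Type*} [Fintype E]

lemma pderiv_comm' (i j : E) (p : MvPolynomial E k) :
    pderiv i (pderiv j p) = pderiv j (pderiv i p) := by
  induction p using MvPolynomial.induction_on' with
  | add p q hp hq => simp [hp, hq]
  | monomial s a =>
    rcases eq_or_ne i j with rfl | hij
    · rfl
    · simp only [pderiv_monomial]
      have h1 : ((s - Finsupp.single j 1 : E →₀ ℕ) i) = s i := by
        simp [Finsupp.single_eq_of_ne' (Ne.symm hij)]
      have h2 : ((s - Finsupp.single i 1 : E →₀ ℕ) j) = s j := by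
        simp [Finsupp.single_eq_of_ne' hij]
      rw [h1, h2, tsub_tsub, tsub_tsub, add_comm (Finsupp.single j 1), mul_right_comm]

lemma commute_pderivL (i j : E) :
    Commute ((pderiv i).toLinearMap : Module.End k (MvPolynomial E k))
      (pderiv j).toLinearMap := by
  apply LinearMap.ext
  intro p
  exact pderiv_comm' i j p

end Infra

section Infra2
variable {k : Type*} [CommSemiring k] {E : Type*} [Fintype E]

noncomputable def pdMon (m : E →₀ ℕ) : Module.End k (MvPolynomial E k) :=
  ((Finset.univ.toList.reverse.map
    fun e => ((pderiv e).toLinearMap : Module.End k (MvPolynomial E k)) ^ m e)).prod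

lemma diffMon_eq (m : E →₀ ℕ) (F : MvPolynomial E k) :
    diffMon m F = pdMon m F := by
  have key : ∀ (l : List E) (F : MvPolynomial E k),
      l.foldl (fun G e => (fun H => pderiv e H)^[m e] G) F =
      ((l.reverse.map
        fun e => ((pderiv e).toLinearMap : Module.End k (MvPolynomial E k)) ^ m e)).prod F := by
    intro l
    induction l with
    | nil => intro F; simp [Module.End.one_apply]
    | cons a l ih =>
      intro F
      simp only [List.foldl_cons, List.reverse_cons, List.map_append, List.prod_append,
        List.map_cons, List.map_nil, List.prod_cons, List.prod_nil, mul_one]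
      rw [ih]
      rw [Module.End.mul_apply]
      congr 1
      rw [Module.End.pow_apply]
      rfl
  exact key _ F

lemma pdMon_commute_aux (e : E) (n : ℕ) (l : List E) (f : E → ℕ) :
    Commute (((pderiv e).toLinearMap : Module.End k (MvPolynomial E k)) ^ n)
      ((l.map fun a => ((pderiv a).toLinearMap : Module.End k (MvPolynomial E k)) ^ f a)).prod := by
  apply Commute.list_prod_right
  intro x hx
  simp only [List.mem_map] at hx
  obtain ⟨a, -, rfl⟩ := hx
  exact (commute_pderivL e a).pow_pow _ _

lemma pdMon_add (m n : E →₀ ℕ) :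
    pdMon (m + n) = (pdMon m  * pdMon n : Module.End k (MvPolynomial E k)) := by
  unfold pdMon
  generalize ((Finset.univ : Finset E).toList.reverse) = l
  induction l with
  | nil => simp
  | cons a l ih =>
    simp only [List.map_cons, List.prod_cons]
    rw [ih, Finsupp.add_apply, pow_add, mul_assoc, mul_assoc]
    congr 1
    rw [← mul_assoc, (pdMon_commute_aux a (n a) l (fun x => m x)).eq, mul_assoc]

lemma diffMon_add (m n : E →₀ ℕ) (F : MvPolynomial E k) :
    diffMon (m + n) F = diffMon m (diffMon n F) := by
  rw [diffMon_eq, diffMon_eq, diffMon_eq, pdMon_add, Module.End.mul_apply]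

end Infra2

section Infra3
variable {k : Type*} [CommSemiring k] {E : Type*} [Fintype E]
variable {φ ψ F G : MvPolynomial E k}

lemma diffAct_eq_sum {s : Finset (E →₀ ℕ)} (hs : φ.support ⊆ s) :
    diffAct φ F = ∑ m ∈ s, φ.coeff m • diffMon m F :=
  Finset.sum_subset hs (fun m _ hm => by
    rw [MvPolynomial.notMem_support_iff.1 hm, zero_smul])

lemma diffAct_add_left : diffAct (φ + ψ) F = diffAct φ F + diffAct ψ F := by
  classical
  rw [diffAct_eq_sum (MvPolynomial.support_add (p := φ) (q := ψ)),
    diffAct_eq_sum (Finset.subset_union_left (s₁ := φ.support) (s₂ := ψ.support)),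
    diffAct_eq_sum (Finset.subset_union_right (s₁ := φ.support) (s₂ := ψ.support)),
    ← Finset.sum_add_distrib]
  exact Finset.sum_congr rfl fun m _ => by rw [MvPolynomial.coeff_add, add_smul]

lemma diffAct_smul_left (c : k) : diffAct (c • φ) F = c • diffAct φ F := by
  rw [diffAct_eq_sum (MvPolynomial.support_smul (a := c) (f := φ))]
  unfold diffAct
  rw [Finset.smul_sum]
  exact Finset.sum_congr rfl fun m _ => by
    rw [MvPolynomial.coeff_smul, smul_eq_mul, smul_smul]

lemma diffAct_zero_left : diffAct (0 : MvPolynomial E k) F = 0 := by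
  simp [diffAct]

lemma diffAct_monomial (a : E →₀ ℕ) (c : k) :
    diffAct (monomial a c) F = c • diffMon a F := by
  classical
  rw [diffAct_eq_sum MvPolynomial.support_monomial_subset,
    Finset.sum_singleton, MvPolynomial.coeff_monomial, if_pos rfl]

lemma diffMon_add_right (m : E →₀ ℕ) : diffMon m (F + G) = diffMon m F + diffMon m G := by
  simp [diffMon_eq]

lemma diffMon_smul_right (m : E →₀ ℕ) (c : k) : diffMon m (c • F) = c • diffMon m F := by
  simp [diffMon_eq]

lemma diffMon_zero_right (m : E →₀ ℕ) : diffMon m (0 : MvPolynomial E k) = 0 := by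
  simp [diffMon_eq]

lemma diffAct_add_right : diffAct φ (F + G) = diffAct φ F + diffAct φ G := by
  unfold diffAct
  rw [← Finset.sum_add_distrib]
  exact Finset.sum_congr rfl fun m _ => by rw [diffMon_add_right, smul_add]

lemma diffAct_smul_right (c : k) : diffAct φ (c • F) = c • diffAct φ F := by
  unfold diffAct
  rw [Finset.smul_sum]
  exact Finset.sum_congr rfl fun m _ => by rw [diffMon_smul_right, smul_comm]

lemma diffAct_zero_right : diffAct φ (0 : MvPolynomial E k) = 0 := by
  unfold diffAct
  exact Finset.sum_eq_zero fun m _ => by rw [diffMon_zero_right, smul_zero]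

lemma diffAct_sum_right {ι : Type*} (s : Finset ι) (f : ι → MvPolynomial E k) :
    diffAct φ (∑ i ∈ s, f i) = ∑ i ∈ s, diffAct φ (f i) := by
  classical
  induction s using Finset.induction_on with
  | empty => simpa using diffAct_zero_right
  | insert _ _ h ih => rw [Finset.sum_insert h, Finset.sum_insert h, diffAct_add_right, ih]

lemma diffAct_mul : diffAct (φ * ψ) F = diffAct φ (diffAct ψ F) := by
  induction φ using MvPolynomial.induction_on' generalizing ψ F with
  | add p q hp hq => rw [add_mul, diffAct_add_left, diffAct_add_left, hp, hq]
  | monomial a c =>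
    induction ψ using MvPolynomial.induction_on' generalizing F with
    | add p q hp hq =>
      rw [mul_add, diffAct_add_left, diffAct_add_left, diffAct_add_right, hp, hq]
    | monomial b d =>
      rw [MvPolynomial.monomial_mul, diffAct_monomial, diffAct_monomial, diffAct_monomial,
        diffMon_smul_right, diffMon_add, smul_smul]

end Infra3

section Infra4
variable {k : Type*} [CommSemiring k] {E : Type*} [Fintype E]
variable {F : MvPolynomial E k}

lemma list_prod_map_eq_of_unique {M : Type*} [Monoid M] (f : E → M) :
    ∀ (l : List E), l.Nodup → ∀ e ∈ l, (∀ e' ∈ l, e' ≠ e → f e' = 1) →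
      (l.map f).prod = f e := by
  intro l
  induction l with
  | nil => intro _ e he; exact absurd he List.not_mem_nil
  | cons a l ih =>
    intro hnd e he hf
    simp only [List.map_cons, List.prod_cons]
    rcases List.mem_cons.1 he with rfl | hel
    · have : ∀ e' ∈ l, f e' = 1 := fun e' he' =>
        hf e' (List.mem_cons_of_mem _ he') (fun h => (List.nodup_cons.1 hnd).1 (h ▸ he'))
      rw [List.prod_eq_one fun x hx => by
        obtain ⟨y, hy, rfl⟩ := List.mem_map.1 hx; exact this y hy, mul_one]
    · rw [hf a List.mem_cons_self (fun h => (List.nodup_cons.1 hnd).1 (h ▸ hel)), one_mul]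
      exact ih (List.nodup_cons.1 hnd).2 e hel
        (fun e' he' hne => hf e' (List.mem_cons_of_mem _ he') hne)

lemma diffMon_single (e : E) : diffMon (Finsupp.single e 1) F = pderiv e F := by
  rw [diffMon_eq]
  unfold pdMon
  rw [list_prod_map_eq_of_unique _ _ (List.nodup_reverse.2 (Finset.nodup_toList _)) e
    (List.mem_reverse.2 (Finset.mem_toList.2 (Finset.mem_univ e)))
    (fun e' _ hne => by rw [Finsupp.single_eq_of_ne' (Ne.symm hne), pow_zero]),
    Finsupp.single_eq_same, pow_one]
  rfl

lemma diffAct_X (e : E) : diffAct (X e) F = pderiv e F := by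
  rw [MvPolynomial.X, diffAct_monomial, diffMon_single, one_smul]

lemma diffAct_X_mul {q : MvPolynomial E k} (e : E) :
    diffAct (X e * q) F = pderiv e (diffAct q F) := by
  rw [diffAct_mul, diffAct_X]

lemma pderiv_prodX [DecidableEq E] (e : E) (B : Finset E) :
    pderiv e (∏ b ∈ B, (X b : MvPolynomial E k)) =
      if e ∈ B then ∏ b ∈ B.erase e, (X b : MvPolynomial E k) else 0 := by
  induction B using Finset.induction_on with
  | empty => simp
  | @insert a B ha ih =>
    rw [Finset.prod_insert ha, pderiv_mul, ih]
    by_cases hae : a = e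
    · subst hae
      rw [if_neg ha, if_pos (Finset.mem_insert_self a B), Finset.erase_insert ha, pderiv_X_self]
      simp
    · rw [pderiv_X_of_ne hae]
      by_cases heB : e ∈ B
      · rw [if_pos heB, if_pos (Finset.mem_insert_of_mem heB),
          Finset.erase_insert_of_ne (a := a) (b := e) hae,
          Finset.prod_insert (fun h => ha (Finset.mem_of_mem_erase h))]
        simp
      · rw [if_neg heB, if_neg (by simp [Ne.symm hae, heB])]
        simp

end Infra4

section Infra5
variable {k : Type*} [CommSemiring k] {E : Type*} [Fintype E]
variable {F : MvPolynomial E k}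

lemma diffMon_zero_mon : diffMon (0 : E →₀ ℕ) F = F := by
  rw [diffMon_eq]
  unfold pdMon
  rw [List.prod_eq_one fun x hx => by
    obtain ⟨y, _, rfl⟩ := List.mem_map.1 hx; rw [Finsupp.coe_zero, Pi.zero_apply, pow_zero]]
  rfl

lemma diffAct_one : diffAct (1 : MvPolynomial E k) F = F := by
  have h : (1 : MvPolynomial E k) = monomial 0 1 := by simp
  rw [h, diffAct_monomial, diffMon_zero_mon, one_smul]

lemma diffAct_prodX_prodX [DecidableEq E] (A B : Finset E) :
    diffAct (∏ e ∈ A, X e) (∏ e ∈ B, (X e : MvPolynomial E k)) =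
      if A ⊆ B then ∏ e ∈ B \ A, X e else 0 := by
  induction A using Finset.induction_on generalizing B with
  | empty =>
    rw [Finset.prod_empty, diffAct_one, if_pos (Finset.empty_subset B), Finset.sdiff_empty]
  | @insert a A ha ih =>
    rw [Finset.prod_insert ha, diffAct_X_mul, ih]
    by_cases hAB : A ⊆ B
    · rw [if_pos hAB, pderiv_prodX]
      by_cases haB : a ∈ B
      · have h1 : a ∈ B \ A := Finset.mem_sdiff.2 ⟨haB, ha⟩
        rw [if_pos h1, if_pos (Finset.insert_subset haB hAB)]
        congr 1
        ext x
        simp only [Finset.mem_erase, Finset.mem_sdiff, Finset.mem_insert]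
        tauto
      · rw [if_neg (fun h => haB (Finset.mem_sdiff.1 h).1),
          if_neg (fun h => haB (h (Finset.mem_insert_self a A)))]
    · rw [if_neg hAB, map_zero,
        if_neg (fun h => hAB (fun x hx => h (Finset.mem_insert_of_mem hx)))]

end Infra5

/-- The generating set
`Λ_M = {x_e²} ∪ {x_S : S dependent} ∪ {x_A − x_{A'} : A, A' independent, σA = σA'}`. -/
def matroidLambda (k : Type*) [CommRing k] {E : Type*} [Fintype E] (M : Matroid E) :
    Set (MvPolynomial E k) :=
  {φ | ∃ e : E, φ = X e ^ 2} ∪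
    {φ | ∃ S : Finset E, ¬ M.Indep (S : Set E) ∧ φ = ∏ e ∈ S, X e} ∪
    {φ | ∃ A A' : Finset E, M.Indep (A : Set E) ∧ M.Indep (A' : Set E) ∧
      M.closure (A : Set E) = M.closure (A' : Set E) ∧
      φ = (∏ e ∈ A, X e) - ∏ e ∈ A', X e}

/-- For a flat `τ`, the polynomial `f_τ = Σ x_F` over independent `F` with `σ(F) = τ`. -/
noncomputable def flatPoly (k : Type*) [CommRing k] {E : Type*} [Fintype E]
    (M : Matroid E) (τ : Set E) : MvPolynomial E k :=
  ∑ F : Finset E,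
    haveI := Classical.propDecidable (M.Indep (F : Set E) ∧ M.closure (F : Set E) = τ)
    if M.Indep (F : Set E) ∧ M.closure (F : Set E) = τ then ∏ e ∈ F, X e else 0

section MatroidLemmas

variable {α : Type*} {M : Matroid α}

lemma flat_closure' (M : Matroid α) (X : Set α) : M.IsFlat (M.closure X) := by
  rw [Matroid.closure_def, Set.sInter_eq_iInter]
  haveI : Nonempty {F : Set α // F ∈ {F | M.IsFlat F ∧ X ∩ M.E ⊆ F}} :=
    ⟨⟨M.E, M.ground_isFlat, Set.inter_subset_right⟩⟩
  exact Matroid.IsFlat.iInter (fun F => F.2.1)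

lemma disj_of_indep {F A : Set α} (hF : M.Indep F) (hAF : A ⊆ F) :
    Disjoint (F \ A) (M.closure A) := by
  rw [Set.disjoint_left]
  rintro e ⟨heF, heA⟩ hecl
  have hsub : A ⊆ F \ {e} := fun x hx =>
    ⟨hAF hx, fun h => heA (by rwa [Set.mem_singleton_iff.1 h] at hx)⟩
  exact hF.notMem_closure_diff_of_mem heF (M.closure_subset_closure hsub hecl)

lemma exchange_lemma (hE : M.E = Set.univ) {A A' G : Set α} (hA' : M.Indep A')
    (hcl : M.closure A = M.closure A') (hG : Disjoint G (M.closure A))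
    (hAG : M.Indep (A ∪ G)) :
    M.Indep (A' ∪ G) ∧ M.closure (A' ∪ G) = M.closure (A ∪ G) := by
  have hground : ∀ S : Set α, S ⊆ M.E := fun S => by rw [hE]; exact Set.subset_univ S
  have hclAG : M.closure (A' ∪ G) = M.closure (A ∪ G) := by
    rw [← M.closure_union_closure_left_eq A' G, ← hcl, M.closure_union_closure_left_eq]
  obtain ⟨B, hB, hA'B⟩ := hA'.subset_isBasis_of_subset
    (Set.subset_union_left : A' ⊆ A' ∪ G) (hground _)
  have hBeq : A' ∪ G ⊆ B := by
    rintro g (hg | hg)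
    · exact hA'B hg
    by_contra hgB
    have hgcl : g ∈ M.closure B := hB.subset_closure (Set.mem_union_right _ hg)
    have hAsub : A ⊆ (A ∪ G) \ {g} := by
      intro a ha
      refine ⟨Set.mem_union_left _ ha, fun h => ?_⟩
      rw [Set.mem_singleton_iff] at h
      subst h
      exact Set.disjoint_left.1 hG hg (M.subset_closure A (hground _) ha)
    have hsub : B ⊆ M.closure ((A ∪ G) \ {g}) := by
      intro x hx
      rcases (hB.subset hx : x ∈ A' ∪ G) with hxA' | hxG
      · exact M.closure_subset_closure hAsub
          (hcl ▸ M.subset_closure A' (hground _) hxA')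
      · have hxg : x ≠ g := fun h => hgB (h ▸ hx)
        exact M.subset_closure _ (hground _) ⟨Set.mem_union_right _ hxG, hxg⟩
    have hgmem : g ∈ M.closure ((A ∪ G) \ {g}) :=
      Matroid.closure_subset_closure_of_subset_closure hsub hgcl
    exact hAG.notMem_closure_diff_of_mem (Set.mem_union_right _ hg) hgmem
  have hBE : B = A' ∪ G := Set.Subset.antisymm hB.subset hBeq
  exact ⟨hBE ▸ hB.indep, hclAG⟩

end MatroidLemmas

section FlatPolyLemmas

variable {k : Type*} [CommRing k] {E : Type*} [Fintype E] {M : Matroid E}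

lemma coeff_zero_prodX [DecidableEq E] (S : Finset E) :
    MvPolynomial.coeff 0 (∏ e ∈ S, (X e : MvPolynomial E k)) = if S = ∅ then 1 else 0 := by
  rcases S.eq_empty_or_nonempty with rfl | ⟨e, he⟩
  · simp
  · rw [if_neg (Finset.nonempty_iff_ne_empty.1 ⟨e, he⟩), ← MvPolynomial.constantCoeff_eq,
      map_prod]
    exact Finset.prod_eq_zero he (by simp)

lemma diffAct_sub_left {φ ψ F : MvPolynomial E k} :
    diffAct (φ - ψ) F = diffAct φ F - diffAct ψ F := by
  have h := diffAct_add_left (φ := φ - ψ) (ψ := ψ) (F := F)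
  rw [sub_add_cancel] at h
  rw [h]
  ring

lemma diffAct_sum_left {ι : Type*} {F : MvPolynomial E k} (s : Finset ι)
    (f : ι → MvPolynomial E k) :
    diffAct (∑ i ∈ s, f i) F = ∑ i ∈ s, diffAct (f i) F := by
  classical
  induction s using Finset.induction_on with
  | empty => simpa using diffAct_zero_left
  | insert _ _ h ih => rw [Finset.sum_insert h, Finset.sum_insert h, diffAct_add_left, ih]

open scoped Classical in
lemma diffAct_prodX_flatPoly [DecidableEq E] (A : Finset E) (τ : Set E) :
    diffAct (∏ e ∈ A, X e) (flatPoly k M τ) =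
      ∑ F : Finset E,
        if M.Indep (F : Set E) ∧ M.closure (F : Set E) = τ ∧ A ⊆ F
          then ∏ e ∈ F \ A, (X e : MvPolynomial E k) else 0 := by
  unfold flatPoly
  rw [diffAct_sum_right]
  refine Finset.sum_congr rfl fun F _ => ?_
  by_cases h : M.Indep (F : Set E) ∧ M.closure (F : Set E) = τ
  · rw [if_pos h, diffAct_prodX_prodX]
    by_cases hAF : A ⊆ F
    · rw [if_pos hAF, if_pos ⟨h.1, h.2, hAF⟩]
    · rw [if_neg hAF, if_neg (fun hc => hAF hc.2.2)]
  · rw [if_neg h, diffAct_zero_right, if_neg (fun hc => h ⟨hc.1, hc.2.1⟩)]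

lemma gen_sq_ann (e : E) (τ : Set E) :
    diffAct ((X e : MvPolynomial E k) ^ 2) (flatPoly k M τ) = 0 := by
  classical
  rw [pow_two, diffAct_mul, diffAct_X, diffAct_X]
  unfold flatPoly
  rw [map_sum, map_sum]
  refine Finset.sum_eq_zero fun F _ => ?_
  by_cases h : M.Indep (F : Set E) ∧ M.closure (F : Set E) = τ
  · rw [if_pos h, pderiv_prodX]
    by_cases heF : e ∈ F
    · rw [if_pos heF, pderiv_prodX, if_neg (Finset.notMem_erase e F)]
    · rw [if_neg heF, map_zero]
  · rw [if_neg h, map_zero, map_zero]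

lemma gen_dep_ann {S : Finset E} (hS : ¬ M.Indep (S : Set E)) (τ : Set E) :
    diffAct (∏ e ∈ S, (X e : MvPolynomial E k)) (flatPoly k M τ) = 0 := by
  classical
  rw [diffAct_prodX_flatPoly]
  refine Finset.sum_eq_zero fun F _ => ?_
  rw [if_neg (fun hc => hS (hc.1.subset (by exact_mod_cast Finset.coe_subset.2 hc.2.2)))]

lemma exch_step [DecidableEq E] (hE : M.E = Set.univ) {A A' F : Finset E}
    (hA' : M.Indep (A' : Set E))
    (hcl : M.closure (A : Set E) = M.closure (A' : Set E))
    (hi : M.Indep (F : Set E)) (hAF : A ⊆ F) :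
    M.Indep (((F \ A) ∪ A' : Finset E) : Set E) ∧
      M.closure (((F \ A) ∪ A' : Finset E) : Set E) = M.closure (F : Set E) ∧
      ((F \ A) ∪ A' : Finset E) \ A' = F \ A := by
  have hground : ∀ S : Set E, S ⊆ M.E := fun S => by rw [hE]; exact Set.subset_univ S
  have hdisj : Disjoint ((F : Set E) \ (A : Set E)) (M.closure (A : Set E)) :=
    disj_of_indep hi (Finset.coe_subset.2 hAF)
  have hAG : M.Indep ((A : Set E) ∪ ((F : Set E) \ (A : Set E))) := by
    rw [Set.union_diff_cancel (Finset.coe_subset.2 hAF)]; exact hi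
  obtain ⟨h1, h2⟩ := exchange_lemma hE hA' hcl hdisj hAG
  have hsetG : (((F \ A) ∪ A' : Finset E) : Set E) =
      (A' : Set E) ∪ ((F : Set E) \ (A : Set E)) := by
    rw [Finset.coe_union, Finset.coe_sdiff, Set.union_comm]
  have hdisj' : Disjoint (F \ A) A' := by
    have h3 : Disjoint ((F : Set E) \ (A : Set E)) (A' : Set E) :=
      hdisj.mono_right ((M.subset_closure (A' : Set E) (hground _)).trans (le_of_eq hcl.symm))
    rw [← Finset.coe_sdiff] at h3
    exact Finset.disjoint_coe.1 h3
  refine ⟨by rw [hsetG]; exact h1, ?_, Finset.union_sdiff_cancel_right hdisj'⟩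
  rw [hsetG, h2, Set.union_diff_cancel (Finset.coe_subset.2 hAF)]

open scoped Classical in
lemma gen_exch_ann [DecidableEq E] (hE : M.E = Set.univ) {A A' : Finset E}
    (hA : M.Indep (A : Set E)) (hA' : M.Indep (A' : Set E))
    (hcl : M.closure (A : Set E) = M.closure (A' : Set E)) (τ : Set E) :
    diffAct ((∏ e ∈ A, X e) - ∏ e ∈ A', (X e : MvPolynomial E k)) (flatPoly k M τ) = 0 := by
  rw [diffAct_sub_left, diffAct_prodX_flatPoly, diffAct_prodX_flatPoly, sub_eq_zero,
    ← Finset.sum_filter, ← Finset.sum_filter]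
  refine Finset.sum_bij' (i := fun F _ => (F \ A) ∪ A') (j := fun F _ => (F \ A') ∪ A)
    ?_ ?_ ?_ ?_ ?_
  · intro F hF
    rw [Finset.mem_filter] at hF ⊢
    obtain ⟨-, hi, hτ, hAF⟩ := hF
    obtain ⟨e1, e2, -⟩ := exch_step hE hA' hcl hi hAF
    exact ⟨Finset.mem_univ _, e1, by rw [e2, hτ], Finset.subset_union_right⟩
  · intro F hF
    rw [Finset.mem_filter] at hF ⊢
    obtain ⟨-, hi, hτ, hAF⟩ := hF
    obtain ⟨e1, e2, -⟩ := exch_step hE hA hcl.symm hi hAF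
    exact ⟨Finset.mem_univ _, e1, by rw [e2, hτ], Finset.subset_union_right⟩
  · intro F hF
    rw [Finset.mem_filter] at hF
    obtain ⟨-, hi, hτ, hAF⟩ := hF
    obtain ⟨-, -, e3⟩ := exch_step hE hA' hcl hi hAF
    show (F \ A ∪ A') \ A' ∪ A = F
    rw [e3, Finset.sdiff_union_of_subset hAF]
  · intro F hF
    rw [Finset.mem_filter] at hF
    obtain ⟨-, hi, hτ, hAF⟩ := hF
    obtain ⟨-, -, e3⟩ := exch_step hE hA hcl.symm hi hAF
    show (F \ A' ∪ A) \ A ∪ A' = F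
    rw [e3, Finset.sdiff_union_of_subset hAF]
  · intro F hF
    rw [Finset.mem_filter] at hF
    obtain ⟨-, hi, hτ, hAF⟩ := hF
    obtain ⟨-, -, e3⟩ := exch_step hE hA' hcl hi hAF
    show _ = ∏ e ∈ (F \ A ∪ A') \ A', (X e : MvPolynomial E k)
    rw [e3]

end FlatPolyLemmas

section Backward

variable {k : Type*} [CommRing k] {E : Type*} [Fintype E] {M : Matroid E}

lemma prodX_support_of_squarefree {m : E →₀ ℕ} (hm : ∀ e, m e ≤ 1) :
    (MvPolynomial.monomial m (1 : k)) = ∏ e ∈ m.support, X e := by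
  rw [← MvPolynomial.prod_X_pow_eq_monomial]
  exact Finset.prod_congr rfl fun e he => by
    rw [le_antisymm (hm e) (Nat.one_le_iff_ne_zero.2 (Finsupp.mem_support_iff.1 he)), pow_one]

/-- The annihilator of `f` as an ideal. -/
def annIdeal (f : MvPolynomial E k) : Ideal (MvPolynomial E k) where
  carrier := {φ | diffAct φ f = 0}
  add_mem' := fun h1 h2 => by
    simp only [Set.mem_setOf_eq] at *
    rw [diffAct_add_left, h1, h2, add_zero]
  zero_mem' := diffAct_zero_left
  smul_mem' := fun c φ h => by
    simp only [Set.mem_setOf_eq, smul_eq_mul] at *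
    rw [diffAct_mul, h, diffAct_zero_right]

open scoped Classical in
lemma pairing [DecidableEq E] {R : Finset E} (hR : M.Indep (R : Set E)) (τ₀ : Set E) :
    MvPolynomial.coeff 0 (diffAct (∏ e ∈ R, X e) (flatPoly k M τ₀)) =
      if M.closure (R : Set E) = τ₀ then 1 else 0 := by
  rw [diffAct_prodX_flatPoly, MvPolynomial.coeff_sum]
  by_cases hτ : M.closure (R : Set E) = τ₀
  · rw [if_pos hτ, Finset.sum_eq_single_of_mem R (Finset.mem_univ R)]
    · rw [if_pos ⟨hR, hτ, Finset.Subset.refl R⟩, Finset.sdiff_self, Finset.prod_empty,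
        MvPolynomial.coeff_zero_one]
    · intro F _ hFR
      rw [apply_ite (MvPolynomial.coeff 0), MvPolynomial.coeff_zero]
      by_cases hc : M.Indep (F : Set E) ∧ M.closure (F : Set E) = τ₀ ∧ R ⊆ F
      · rw [if_pos hc, coeff_zero_prodX, if_neg]
        intro hempty
        exact hFR (Finset.Subset.antisymm (Finset.sdiff_eq_empty_iff_subset.1 hempty) hc.2.2)
      · rw [if_neg hc]
  · rw [if_neg hτ]
    refine Finset.sum_eq_zero fun F _ => ?_
    rw [apply_ite (MvPolynomial.coeff 0), MvPolynomial.coeff_zero]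
    by_cases hc : M.Indep (F : Set E) ∧ M.closure (F : Set E) = τ₀ ∧ R ⊆ F
    · rw [if_pos hc, coeff_zero_prodX, if_neg]
      intro hempty
      exact hτ (by
        rw [Finset.Subset.antisymm (Finset.sdiff_eq_empty_iff_subset.1 hempty) hc.2.2] at hc
        exact hc.2.1)
    · rw [if_neg hc]

end Backward

set_option maxHeartbeats 1000000 in
/-- the ideal `J_M` generated by `Λ_M` equals the intersection
`∩_{τ ∈ Ω} Ann f_τ` over all flats `τ` of `M`. -/
theorem span_lambda_eq_inter_ann (k : Type*) [Field k] [CharZero k] {E : Type*}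
    [Fintype E] (M : Matroid E) (hE : M.E = Set.univ) :
    ∀ φ : MvPolynomial E k, φ ∈ Ideal.span (matroidLambda k M) ↔
      ∀ τ : Set E, M.IsFlat τ → diffAct φ (flatPoly k M τ) = 0 := by
  classical
  have hfwd : ∀ χ : MvPolynomial E k, χ ∈ Ideal.span (matroidLambda k M) →
      ∀ τ : Set E, diffAct χ (flatPoly k M τ) = 0 := by
    intro χ hχ τ
    have hspan : Ideal.span (matroidLambda k M) ≤ annIdeal (flatPoly k M τ) := by
      rw [Ideal.span_le]
      rintro ψ ((⟨e, rfl⟩ | ⟨S, hS, rfl⟩) | ⟨A, A', hA, hA', hcl, rfl⟩)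
      · exact gen_sq_ann e τ
      · exact gen_dep_ann hS τ
      · exact gen_exch_ann hE hA hA' hcl τ
    exact hspan hχ
  intro φ
  constructor
  · intro hφ τ _
    exact hfwd φ hφ τ
  · intro hAnn
    -- choose representative independent sets for closures
    have hrep : ∀ τ : Set E, ∃ B : Finset E,
        M.Indep (B : Set E) ∧ M.closure (B : Set E) = M.closure τ := by
      intro τ
      obtain ⟨I, hI⟩ := M.exists_isBasis τ (by rw [hE]; exact Set.subset_univ τ)
      refine ⟨(Set.toFinite I).toFinset, ?_, ?_⟩
      · rw [Set.Finite.coe_toFinset]; exact hI.indep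
      · rw [Set.Finite.coe_toFinset]; exact hI.closure_eq_closure
    choose R hRi hRc using hrep
    set g : (E →₀ ℕ) → MvPolynomial E k := fun m =>
      if (∀ e, m e ≤ 1) ∧ M.Indep ((m.support : Finset E) : Set E)
        then ∏ e ∈ R (M.closure ((m.support : Finset E) : Set E)), X e else 0 with hg
    set ψ : MvPolynomial E k := ∑ m ∈ φ.support, MvPolynomial.coeff m φ • g m with hψdef
    have hJ : φ - ψ ∈ Ideal.span (matroidLambda k M) := by
      have hsum : φ = ∑ m ∈ φ.support, MvPolynomial.monomial m (MvPolynomial.coeff m φ) :=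
        MvPolynomial.as_sum φ
      have hdiff : φ - ψ = ∑ m ∈ φ.support,
          MvPolynomial.coeff m φ • (MvPolynomial.monomial m 1 - g m) := by
        rw [hψdef]
        nth_rewrite 1 [hsum]
        rw [← Finset.sum_sub_distrib]
        refine Finset.sum_congr rfl fun m _ => ?_
        rw [smul_sub, MvPolynomial.smul_monomial, smul_eq_mul, mul_one]
      rw [hdiff]
      refine Ideal.sum_mem _ fun m _ => ?_
      rw [MvPolynomial.smul_eq_C_mul]
      refine Ideal.mul_mem_left _ _ ?_
      by_cases h1 : ∀ e, m e ≤ 1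
      · by_cases h2 : M.Indep ((m.support : Finset E) : Set E)
        · rw [hg]
          simp only [if_pos (And.intro h1 h2)]
          rw [prodX_support_of_squarefree h1]
          refine Ideal.subset_span (Or.inr ?_)
          exact ⟨m.support, R _, h2, hRi _, by rw [hRc, Matroid.closure_closure], rfl⟩
        · rw [hg]
          simp only [if_neg (fun hc : (∀ e, m e ≤ 1) ∧ M.Indep ((m.support : Finset E) : Set E) => h2 hc.2)]
          rw [sub_zero, prodX_support_of_squarefree h1]
          exact Ideal.subset_span (Or.inl (Or.inr ⟨m.support, h2, rfl⟩))
      · push_neg at h1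
        obtain ⟨e, he⟩ := h1
        rw [hg]
        simp only [if_neg (fun hc : (∀ e, m e ≤ 1) ∧ _ => not_le.2 he (hc.1 e))]
        rw [sub_zero]
        have hle : Finsupp.single e 2 ≤ m := by
          rw [Finsupp.single_le_iff]
          exact he
        have hmono : MvPolynomial.monomial m (1 : k) =
            (X e ^ 2) * MvPolynomial.monomial (m - Finsupp.single e 2) 1 := by
          rw [MvPolynomial.X_pow_eq_monomial, MvPolynomial.monomial_mul, one_mul,
            add_tsub_cancel_of_le hle]
        rw [hmono]
        exact Ideal.mul_mem_right _ _ (Ideal.subset_span (Or.inl (Or.inl ⟨e, rfl⟩)))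
    have hψAnn : ∀ τ : Set E, M.IsFlat τ → diffAct ψ (flatPoly k M τ) = 0 := by
      intro τ hτ
      have h2 := hfwd _ hJ τ
      rw [diffAct_sub_left, hAnn τ hτ, zero_sub, neg_eq_zero] at h2
      exact h2
    have hkey : ∀ τ₀ : Set E, M.IsFlat τ₀ →
        ∑ m ∈ φ.support.filter (fun m =>
          ((∀ e, m e ≤ 1) ∧ M.Indep ((m.support : Finset E) : Set E)) ∧
            M.closure ((m.support : Finset E) : Set E) = τ₀),
          MvPolynomial.coeff m φ = 0 := by
      intro τ₀ hτ₀
      have h1 : MvPolynomial.coeff 0 (diffAct ψ (flatPoly k M τ₀)) = 0 := by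
        rw [hψAnn τ₀ hτ₀, MvPolynomial.coeff_zero]
      rw [hψdef, diffAct_sum_left, MvPolynomial.coeff_sum] at h1
      have h2 : ∀ m ∈ φ.support,
          MvPolynomial.coeff 0 (diffAct (MvPolynomial.coeff m φ • g m) (flatPoly k M τ₀)) =
          if ((∀ e, m e ≤ 1) ∧ M.Indep ((m.support : Finset E) : Set E)) ∧
              M.closure ((m.support : Finset E) : Set E) = τ₀
            then MvPolynomial.coeff m φ else 0 := by
        intro m _
        rw [diffAct_smul_left, MvPolynomial.coeff_smul, smul_eq_mul]
        by_cases hgood : (∀ e, m e ≤ 1) ∧ M.Indep ((m.support : Finset E) : Set E)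
        · rw [hg]
          simp only [if_pos hgood]
          rw [pairing (hRi _), hRc, Matroid.closure_closure]
          by_cases hcl : M.closure ((m.support : Finset E) : Set E) = τ₀
          · rw [if_pos hcl, if_pos ⟨hgood, hcl⟩, mul_one]
          · rw [if_neg hcl, if_neg (fun hc : ((∀ e, m e ≤ 1) ∧ M.Indep ((m.support : Finset E) : Set E)) ∧ M.closure ((m.support : Finset E) : Set E) = τ₀ => hcl hc.2), mul_zero]
        · rw [hg]
          simp only [if_neg hgood]
          rw [diffAct_zero_left, MvPolynomial.coeff_zero, mul_zero,
            if_neg (fun hc : ((∀ e, m e ≤ 1) ∧ M.Indep ((m.support : Finset E) : Set E)) ∧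
              M.closure ((m.support : Finset E) : Set E) = τ₀ => hgood hc.1)]
      rw [Finset.sum_congr rfl h2, ← Finset.sum_filter] at h1
      exact h1
    have hψ0 : ψ = 0 := by
      rw [hψdef]
      set P : (E →₀ ℕ) → Prop := fun m =>
        (∀ e, m e ≤ 1) ∧ M.Indep ((m.support : Finset E) : Set E) with hP
      set key : (E →₀ ℕ) → Set E := fun m => M.closure ((m.support : Finset E) : Set E)
        with hkeydef
      have hsplit : ∑ m ∈ φ.support.filter P, MvPolynomial.coeff m φ • g m
          = ∑ m ∈ φ.support, MvPolynomial.coeff m φ • g m := by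
        refine Finset.sum_filter_of_ne fun m _ hne => ?_
        by_contra hgood
        apply hne
        rw [hg]
        simp only [if_neg hgood]
        rw [smul_zero]
      rw [← hsplit]
      have hfib := Finset.sum_fiberwise_of_maps_to (s := φ.support.filter P)
        (t := (φ.support.filter P).image key) (g := key)
        (fun m hm => Finset.mem_image_of_mem _ hm)
        (f := fun m => MvPolynomial.coeff m φ • g m)
      rw [← hfib]
      refine Finset.sum_eq_zero fun τ hτmem => ?_
      have hconst : ∀ m ∈ (φ.support.filter P).filter (fun m => key m = τ),
          MvPolynomial.coeff m φ • g m = MvPolynomial.coeff m φ • ∏ e ∈ R τ, X e := by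
        intro m hm
        rw [Finset.mem_filter, Finset.mem_filter] at hm
        obtain ⟨⟨-, hgood⟩, hclm⟩ := hm
        rw [hg]
        simp only [if_pos (show (∀ e, m e ≤ 1) ∧
          M.Indep ((m.support : Finset E) : Set E) from hgood)]
        rw [show M.closure ((m.support : Finset E) : Set E) = τ from hclm]
      rw [Finset.sum_congr rfl hconst, ← Finset.sum_smul]
      obtain ⟨m₀, hm₀, rfl⟩ := Finset.mem_image.1 hτmem
      have hflat : M.IsFlat (key m₀) := flat_closure' M _
      have h := hkey _ hflat
      rw [Finset.filter_filter]
      have hset : φ.support.filter (fun m => P m ∧ key m = key m₀)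
          = φ.support.filter (fun m =>
            ((∀ e, m e ≤ 1) ∧ M.Indep ((m.support : Finset E) : Set E)) ∧
              M.closure ((m.support : Finset E) : Set E) = key m₀) := rfl
      rw [hset, h, zero_smul]
    rw [hψ0, sub_zero] at hJ
    exact hJ
end
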